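/- arXiv:1808.03622 — 7 statements merged into one kernel-verified Lean document; each statement's English description precedes it below -/
import Mathlib

section
/- Let g be a unimodal map with parameter v, let x_0 be the unique fixed point of g in [v,1], and let ψ : [0,1] → [0,1] be a continuous map with ψ ∘ g = g ∘ ψ. If ψ(0) = x_0, then ψ(1) ≤ x_0. -/
open Set

/-- The tent map `x ↦ 1 - |1 - 2x|`. -/
noncomputable def tent (x : ℝ) : ℝ := 1 - |1 - 2*x|

/-- `g` is unimodal with turning point `v`. -/
def IsUnimodalWith (g : ℝ → ℝ) (v : ℝ) : Prop :=
  ContinuousOn g (Icc 0 1) ∧ MapsTo g (Icc 0 1) (Icc 0 1) ∧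
  v ∈ Ioo (0:ℝ) 1 ∧ StrictMonoOn g (Icc 0 v) ∧ StrictAntiOn g (Icc v 1) ∧
  g 0 = 0 ∧ g 1 = 0 ∧ g v = 1

/-- `g` is unimodal. -/
def IsUnimodal (g : ℝ → ℝ) : Prop := ∃ v, IsUnimodalWith g v

/-- `φ` is piecewise linear on `[0,1]`. -/
def IsPiecewiseLinear (φ : ℝ → ℝ) : Prop :=
  ∃ (m : ℕ) (a : ℕ → ℝ), 0 < m ∧ a 0 = 0 ∧ a m = 1 ∧
    (∀ i < m, a i < a (i+1)) ∧
    ∀ i < m, ∃ c d : ℝ, ∀ x ∈ Icc (a i) (a (i+1)), φ x = c * x + d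
/-- `φ` is affine on `[s,e]`. -/
def LinOnIcc (φ : ℝ → ℝ) (s e : ℝ) : Prop := ∃ c d : ℝ, ∀ x ∈ Icc s e, φ x = c * x + d

/-- `a` is the first (smallest) positive kink of `φ`:
`φ` is linear on `[0,a]` and on no larger interval `[0,c]`. -/
def FirstKink (φ : ℝ → ℝ) (a : ℝ) : Prop :=
  0 < a ∧ LinOnIcc φ 0 a ∧ ∀ c, a < c → ¬ LinOnIcc φ 0 c

/-- The complete preimage of `0` under `g` (inside `[0,1]`). -/
def preimZero (g : ℝ → ℝ) : Set ℝ :=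
  {x | x ∈ Icc (0:ℝ) 1 ∧ ∃ n : ℕ, 1 ≤ n ∧ g^[n] x = 0}

/-- The map `ξ_t`. -/
noncomputable def xi (t : ℕ) (x : ℝ) : ℝ :=
  (1 - (-1:ℝ) ^ ⌊(t:ℝ) * x⌋) / 2 + (-1:ℝ) ^ ⌊(t:ℝ) * x⌋ * Int.fract ((t:ℝ) * x)

/-- `μ n k` enumerates, in increasing order, the `2^(n-1)+1` points of `g^{-n}(0)`. -/
def IsMuFamily (g : ℝ → ℝ) (μ : ℕ → ℕ → ℝ) : Prop :=
  ∀ n : ℕ, 1 ≤ n →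
    (∀ k ≤ 2^(n-1), μ n k ∈ Icc (0:ℝ) 1 ∧ g^[n] (μ n k) = 0) ∧
    (∀ k < 2^(n-1), μ n k < μ n (k+1)) ∧
    (∀ x ∈ Icc (0:ℝ) 1, g^[n] x = 0 → ∃ k ≤ 2^(n-1), x = μ n k)

/-- `ψ` is monotone (in either direction) on `s`. -/
def MonoOrAntiOn (ψ : ℝ → ℝ) (s : Set ℝ) : Prop := MonotoneOn ψ s ∨ AntitoneOn ψ s

/-- `[c,d]` is a maximal interval of monotonicity of `ψ` in `[0,1]`. -/
def IsMaxMonoInterval (ψ : ℝ → ℝ) (c d : ℝ) : Prop :=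
  0 ≤ c ∧ c < d ∧ d ≤ 1 ∧ MonoOrAntiOn ψ (Icc c d) ∧
  ∀ c' d', 0 ≤ c' → d' ≤ 1 → Icc c d ⊆ Icc c' d' → Icc c d ≠ Icc c' d' →
    ¬ MonoOrAntiOn ψ (Icc c' d')

/-- `ψ` has exactly `N` maximal intervals of monotonicity, cut at points `b 0 < ⋯ < b N`. -/
def HasExactlyMonoIntervals (ψ : ℝ → ℝ) (N : ℕ) : Prop :=
  ∃ b : ℕ → ℝ, b 0 = 0 ∧ b N = 1 ∧ (∀ i < N, b i < b (i+1)) ∧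
    (∀ i < N, MonoOrAntiOn ψ (Icc (b i) (b (i+1)))) ∧
    (∀ i, i + 2 ≤ N → ¬ MonoOrAntiOn ψ (Icc (b i) (b (i+2))))
/-- if `ψ` commutes with a unimodal map `g` and `ψ 0 = x₀`, the unique
fixed point of `g` in `[v,1]`, then `ψ 1 ≤ x₀`. -/
theorem commutator_at_one_le_fixed_point
    (g ψ : ℝ → ℝ) (v x0 : ℝ) (hg : IsUnimodalWith g v)
    (hx0 : x0 ∈ Icc v 1) (hfix : g x0 = x0)
    (huniq : ∀ y ∈ Icc v 1, g y = y → y = x0)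
    (hψc : ContinuousOn ψ (Icc 0 1)) (hψm : MapsTo ψ (Icc 0 1) (Icc 0 1))
    (hcomm : ∀ x ∈ Icc (0:ℝ) 1, ψ (g x) = g (ψ x))
    (hψ0 : ψ 0 = x0) :
    ψ 1 ≤ x0 := by
  obtain ⟨hgc, hgm, hv, hmono, hanti, hg0, hg1, hgv⟩ := hg
  have h1 : (1:ℝ) ∈ Icc (0:ℝ) 1 := by constructor <;> norm_num
  have hψ1 : ψ 1 ∈ Icc (0:ℝ) 1 := hψm h1
  have key : g (ψ 1) = x0 := by
    have := hcomm 1 h1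
    rw [hg1, hψ0] at this
    exact this.symm
  by_contra h
  push_neg at h
  have hx0v : x0 ∈ Icc v 1 := hx0
  have hψ1v : ψ 1 ∈ Icc v 1 := ⟨le_trans hx0.1 h.le, hψ1.2⟩
  have := hanti hx0v hψ1v h
  rw [key, hfix] at this
  exact lt_irrefl x0 this
end

section
/- Let g be a unimodal map and let ψ : [0,1] → [0,1] be a non-constant continuous piecewise linear map such that ψ ∘ g = g ∘ ψ. Then ψ(1) ∈ {0, 1}. -/
open Set

section CMhelp

variable {f : ℝ → ℝ}

lemma CM_monoOrAntiOn_mono {s t : Set ℝ} (hst : s ⊆ t) (h : MonoOrAntiOn f t) :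
    MonoOrAntiOn f s := by
  rcases h with h | h
  · exact Or.inl (h.mono hst)
  · exact Or.inr (h.mono hst)

lemma CM_neg (h : MonoOrAntiOn f s) : MonoOrAntiOn (fun x => -(f x)) s := by
  rcases h with h | h
  · exact Or.inr (fun x hx y hy hxy => neg_le_neg (h hx hy hxy))
  · exact Or.inl (fun x hx y hy hxy => neg_le_neg (h hx hy hxy))

lemma CM_between {a b x : ℝ} (h : MonoOrAntiOn f (Icc a b)) (hax : a ≤ x) (hxb : x ≤ b) :
    min (f a) (f b) ≤ f x ∧ f x ≤ max (f a) (f b) := by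
  have hab : a ≤ b := le_trans hax hxb
  have hamem : a ∈ Icc a b := ⟨le_refl a, hab⟩
  have hbmem : b ∈ Icc a b := ⟨hab, le_refl b⟩
  have hxmem : x ∈ Icc a b := ⟨hax, hxb⟩
  rcases h with h | h
  · exact ⟨le_trans (min_le_left _ _) (h hamem hxmem hax),
      le_trans (h hxmem hbmem hxb) (le_max_right _ _)⟩
  · exact ⟨le_trans (min_le_right _ _) (h hxmem hbmem hxb),
      le_trans (h hamem hxmem hax) (le_max_left _ _)⟩

lemma CM_level_conv {a b x y z w : ℝ} (h : MonoOrAntiOn f (Icc a b))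
    (hx : x ∈ Icc a b) (hy : y ∈ Icc a b) (hfx : f x = w) (hfy : f y = w)
    (hxz : x ≤ z) (hzy : z ≤ y) : f z = w := by
  have h' : MonoOrAntiOn f (Icc x y) :=
    CM_monoOrAntiOn_mono (Icc_subset_Icc hx.1 hy.2) h
  have := CM_between h' hxz hzy
  rw [hfx, hfy, min_self, max_self] at this
  exact le_antisymm this.2 this.1

lemma CM_mono_union {a b c : ℝ} (hab : a ≤ b) (hbc : b ≤ c)
    (h1 : MonotoneOn f (Icc a b)) (h2 : MonotoneOn f (Icc b c)) :
    MonotoneOn f (Icc a c) := by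
  intro x hx y hy hxy
  rcases le_total y b with hyb | hby
  · exact h1 ⟨hx.1, le_trans hxy hyb⟩ ⟨hy.1, hyb⟩ hxy
  · rcases le_total x b with hxb | hbx
    · calc f x ≤ f b := h1 ⟨hx.1, hxb⟩ ⟨hab, le_refl b⟩ hxb
        _ ≤ f y := h2 ⟨le_refl b, hbc⟩ ⟨hby, hy.2⟩ hby
    · exact h2 ⟨hbx, le_trans hxy hy.2⟩ ⟨hby, hy.2⟩ hxy

lemma CM_anti_union {a b c : ℝ} (hab : a ≤ b) (hbc : b ≤ c)
    (h1 : AntitoneOn f (Icc a b)) (h2 : AntitoneOn f (Icc b c)) :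
    AntitoneOn f (Icc a c) := by
  intro x hx y hy hxy
  rcases le_total y b with hyb | hby
  · exact h1 ⟨hx.1, le_trans hxy hyb⟩ ⟨hy.1, hyb⟩ hxy
  · rcases le_total x b with hxb | hbx
    · calc f y ≤ f b := h2 ⟨le_refl b, hbc⟩ ⟨hby, hy.2⟩ hby
        _ ≤ f x := h1 ⟨hx.1, hxb⟩ ⟨hab, le_refl b⟩ hxb
    · exact h2 ⟨hbx, le_trans hxy hy.2⟩ ⟨hby, hy.2⟩ hxy

lemma CM_const_mono {a b w : ℝ} (h : ∀ x ∈ Icc a b, f x = w) :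
    MonotoneOn f (Icc a b) := by
  intro x hx y hy _
  rw [h x hx, h y hy]

lemma CM_const_anti {a b w : ℝ} (h : ∀ x ∈ Icc a b, f x = w) :
    AntitoneOn f (Icc a b) := by
  intro x hx y hy _
  rw [h x hx, h y hy]

/-- If a piece is monotone-or-anti with equal endpoint values, it is constant. -/
lemma CM_const_of_eq {a b : ℝ} (hab : a ≤ b) (h : MonoOrAntiOn f (Icc a b))
    (he : f a = f b) : ∀ x ∈ Icc a b, f x = f a := by
  intro x hx
  have := CM_between h hx.1 hx.2
  rw [← he, min_self, max_self] at this
  exact le_antisymm this.2 this.1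

/-- The zone counting lemma: two families of nonempty order-convex sets with the same
union, each family pairwise separated by points outside the union, have equal size. -/
lemma CM_zone {α β : Type} [Fintype α] [Fintype β] (S : Set ℝ)
    (A : α → Set ℝ) (B : β → Set ℝ)
    (hAcov : ∀ x ∈ S, ∃ i, x ∈ A i) (hAsub : ∀ i, A i ⊆ S)
    (hBcov : ∀ x ∈ S, ∃ j, x ∈ B j) (hBsub : ∀ j, B j ⊆ S)
    (hAne : ∀ i, (A i).Nonempty) (hBne : ∀ j, (B j).Nonempty)
    (hAconv : ∀ i, ∀ x ∈ A i, ∀ y ∈ A i, ∀ z, x ≤ z → z ≤ y → z ∈ A i)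
    (hBconv : ∀ j, ∀ x ∈ B j, ∀ y ∈ B j, ∀ z, x ≤ z → z ≤ y → z ∈ B j)
    (hAsep : ∀ i i', i ≠ i' → ∀ a ∈ A i, ∀ a' ∈ A i',
      ∃ ξ, ξ ∉ S ∧ ((a < ξ ∧ ξ < a') ∨ (a' < ξ ∧ ξ < a)))
    (hBsep : ∀ j j', j ≠ j' → ∀ b ∈ B j, ∀ b' ∈ B j',
      ∃ ξ, ξ ∉ S ∧ ((b < ξ ∧ ξ < b') ∨ (b' < ξ ∧ ξ < b))) :
    Fintype.card α = Fintype.card β := by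
  classical
  -- a given A-set meets a unique B-set
  have uniqB : ∀ i j j', (A i ∩ B j).Nonempty → (A i ∩ B j').Nonempty → j = j' := by
    intro i j j' ⟨b, hbA, hbB⟩ ⟨b', hb'A, hb'B⟩
    by_contra hne
    obtain ⟨ξ, hξS, hξ⟩ := hBsep j j' hne b hbB b' hb'B
    have : ξ ∈ A i := by
      rcases hξ with ⟨h1, h2⟩ | ⟨h1, h2⟩
      · exact hAconv i b hbA b' hb'A ξ (le_of_lt h1) (le_of_lt h2)
      · exact hAconv i b' hb'A b hbA ξ (le_of_lt h1) (le_of_lt h2)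
    exact hξS (hAsub i this)
  have uniqA : ∀ j i i', (A i ∩ B j).Nonempty → (A i' ∩ B j).Nonempty → i = i' := by
    intro j i i' ⟨b, hbA, hbB⟩ ⟨b', hb'A, hb'B⟩
    by_contra hne
    obtain ⟨ξ, hξS, hξ⟩ := hAsep i i' hne b hbA b' hb'A
    have : ξ ∈ B j := by
      rcases hξ with ⟨h1, h2⟩ | ⟨h1, h2⟩
      · exact hBconv j b hbB b' hb'B ξ (le_of_lt h1) (le_of_lt h2)
      · exact hBconv j b' hb'B b hbB ξ (le_of_lt h1) (le_of_lt h2)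
    exact hξS (hBsub j this)
  have hmeet : ∀ i, ∃ j, (A i ∩ B j).Nonempty := by
    intro i
    obtain ⟨a, ha⟩ := hAne i
    obtain ⟨j, hj⟩ := hBcov a (hAsub i ha)
    exact ⟨j, a, ha, hj⟩
  choose e he using hmeet
  have hbij : Function.Bijective e := by
    constructor
    · intro i i' hii
      obtain hi := he i
      obtain hi' := he i'
      rw [hii] at hi
      exact uniqA (e i') i i' hi hi'
    · intro j
      obtain ⟨b, hb⟩ := hBne j
      obtain ⟨i, hi⟩ := hAcov b (hBsub j hb)
      refine ⟨i, uniqB i (e i) j (he i) ⟨b, hi, hb⟩⟩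
  exact Fintype.card_of_bijective hbij

end CMhelp

section CMchain

lemma CM_smono (s : ℕ → ℝ) (r : ℕ) (h : ∀ k < r, s k ≤ s (k+1)) :
    ∀ i j, i ≤ j → j ≤ r → s i ≤ s j := by
  intro i j hij hjr
  induction j with
  | zero =>
    have : i = 0 := by omega
    rw [this]
  | succ n ihn =>
    rcases Nat.lt_or_ge i (n+1) with hlt | hge
    · have h1 : s i ≤ s n := ihn (by omega) (by omega)
      exact le_trans h1 (h n (by omega))
    · have : i = n + 1 := by omega
      rw [this]

lemma CM_extract (f : ℝ → ℝ) (s : ℕ → ℝ) (r : ℕ)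
    (hstep : ∀ k < r, s k ≤ s (k+1))
    (hmono : ∀ k < r, MonoOrAntiOn f (Icc (s k) (s (k+1)))) :
    ∀ n : ℕ, ∀ x y : ℝ,
      ((Finset.range (r+1)).filter (fun k => x < s k ∧ s k < y)).card ≤ n →
      s 0 ≤ x → y ≤ s r → x < y → f x < f y →
      ∃ k, k < r ∧ ∃ α β, x ≤ α ∧ α < β ∧ β ≤ y ∧ s k ≤ α ∧ β ≤ s (k+1) ∧ f α < f β := by
  classical
  intro n
  induction n with
  | zero =>
    intro x y hcard hx hy hxy hfxy
    have hempty : ((Finset.range (r+1)).filter (fun k => x < s k ∧ s k < y)) = ∅ := by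
      exact Finset.card_eq_zero.mp (Nat.le_zero.mp hcard)
    set k := Nat.findGreatest (fun k => s k ≤ x) r with hkdef
    have hkle : k ≤ r := Nat.findGreatest_le r
    have hkx : s k ≤ x :=
      Nat.findGreatest_spec (P := fun k => s k ≤ x) (Nat.zero_le r) hx
    have hkr : k < r := by
      rcases Nat.lt_or_ge k r with h | h
      · exact h
      · exfalso
        have : k = r := by omega
        rw [this] at hkx
        linarith
    have hxk1 : x < s (k+1) := by
      by_contra hcon
      push_neg at hcon
      exact Nat.findGreatest_is_greatest (P := fun k => s k ≤ x) (n := r)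
        (by omega) (by omega) hcon
    have hyk1 : y ≤ s (k+1) := by
      by_contra hcon
      push_neg at hcon
      have : (k+1) ∈ (Finset.range (r+1)).filter (fun k => x < s k ∧ s k < y) := by
        simp only [Finset.mem_filter, Finset.mem_range]
        exact ⟨by omega, hxk1, hcon⟩
      rw [hempty] at this
      exact absurd this (Finset.notMem_empty _)
    have hxm : x ∈ Icc (s k) (s (k+1)) := ⟨hkx, le_of_lt (lt_of_lt_of_le hxy hyk1)⟩
    have hym : y ∈ Icc (s k) (s (k+1)) := ⟨le_trans hkx (le_of_lt hxy), hyk1⟩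
    rcases hmono k hkr with hm | ha
    · exact ⟨k, hkr, x, y, le_refl x, hxy, le_refl y, hkx, hyk1, hfxy⟩
    · exact absurd (ha hxm hym (le_of_lt hxy)) (not_le_of_gt hfxy)
  | succ n ihn =>
    intro x y hcard hx hy hxy hfxy
    rcases Finset.eq_empty_or_nonempty
      ((Finset.range (r+1)).filter (fun k => x < s k ∧ s k < y)) with hempty | ⟨k₀, hk₀⟩
    · -- same as the base case; card ≤ 0
      have h0 : ((Finset.range (r+1)).filter (fun k => x < s k ∧ s k < y)).card ≤ 0 := by
        rw [hempty]; simp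
      -- reuse by strong recursion: apply the zero case via ihn? easier: redo
      -- here just call the zero-case instance of this lemma by recursion on 0:
      -- trick: since card ≤ 0 ≤ n, use ihn when n ≥ 0? ihn has card ≤ n
      exact ihn x y (le_trans h0 (Nat.zero_le n)) hx hy hxy hfxy
    · have hk₀' := Finset.mem_filter.mp hk₀
      have hk₀r : k₀ < r + 1 := Finset.mem_range.mp hk₀'.1
      obtain ⟨hxk₀, hk₀y⟩ := hk₀'.2
      rcases le_or_gt (f (s k₀)) (f x) with h1 | h2
      · -- recurse on (s k₀, y)
        have hf' : f (s k₀) < f y := lt_of_le_of_lt h1 hfxy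
        have hsub : (Finset.range (r+1)).filter (fun k => s k₀ < s k ∧ s k < y) ⊆
            ((Finset.range (r+1)).filter (fun k => x < s k ∧ s k < y)).erase k₀ := by
          intro k hk
          have hk' := Finset.mem_filter.mp hk
          refine Finset.mem_erase.mpr ⟨?_, Finset.mem_filter.mpr ⟨hk'.1, lt_trans hxk₀ hk'.2.1, hk'.2.2⟩⟩
          intro heq
          rw [heq] at hk'
          exact lt_irrefl _ hk'.2.1
        have hcard' : ((Finset.range (r+1)).filter (fun k => s k₀ < s k ∧ s k < y)).card ≤ n := by
          have h1' := Finset.card_le_card hsub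
          have h2' := Finset.card_erase_of_mem hk₀
          omega
        obtain ⟨k, hkr, α, β, hα1, hαβ, hβ1, hα2, hβ2, hfαβ⟩ :=
          ihn (s k₀) y hcard' (CM_smono s r hstep 0 k₀ (Nat.zero_le _) (by omega)) hy hk₀y hf'
        exact ⟨k, hkr, α, β, le_trans (le_of_lt hxk₀) hα1, hαβ, hβ1, hα2, hβ2, hfαβ⟩
      · -- recurse on (x, s k₀)
        have hsub : (Finset.range (r+1)).filter (fun k => x < s k ∧ s k < s k₀) ⊆
            ((Finset.range (r+1)).filter (fun k => x < s k ∧ s k < y)).erase k₀ := by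
          intro k hk
          have hk' := Finset.mem_filter.mp hk
          refine Finset.mem_erase.mpr ⟨?_, Finset.mem_filter.mpr ⟨hk'.1, hk'.2.1, lt_trans hk'.2.2 hk₀y⟩⟩
          intro heq
          rw [heq] at hk'
          exact lt_irrefl _ hk'.2.2
        have hcard' : ((Finset.range (r+1)).filter (fun k => x < s k ∧ s k < s k₀)).card ≤ n := by
          have h1' := Finset.card_le_card hsub
          have h2' := Finset.card_erase_of_mem hk₀
          omega
        obtain ⟨k, hkr, α, β, hα1, hαβ, hβ1, hα2, hβ2, hfαβ⟩ :=
          ihn x (s k₀) hcard' hx (CM_smono s r hstep k₀ r (by omega) (le_refl r)) hxk₀ h2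
        exact ⟨k, hkr, α, β, hα1, hαβ, le_trans hβ1 (le_of_lt hk₀y), hα2, hβ2, hfαβ⟩

lemma CM_pairs (f : ℝ → ℝ) (s : ℕ → ℝ) (r : ℕ)
    (hstep : ∀ k < r, s k ≤ s (k+1))
    (hmono : ∀ k < r, MonoOrAntiOn f (Icc (s k) (s (k+1))))
    (z : ℕ → ℝ) (M : ℕ)
    (hz : ∀ j < M, z j < z (j+1))
    (hz0 : s 0 ≤ z 0) (hzM : z M ≤ s r)
    (hstrict : ∀ j < M, f (z j) ≠ f (z (j+1)))
    (halt : ∀ j, j + 2 ≤ M →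
      (f (z j) < f (z (j+1)) ∧ f (z (j+2)) < f (z (j+1))) ∨
      (f (z (j+1)) < f (z j) ∧ f (z (j+1)) < f (z (j+2)))) :
    M ≤ ((Finset.range r).filter (fun k => s k < s (k+1))).card := by
  classical
  have hzmono : ∀ i j, i ≤ j → j ≤ M → z i ≤ z j := by
    intro i j hij hjM
    induction j with
    | zero => have : i = 0 := by omega
              rw [this]
    | succ n ihn =>
      rcases Nat.lt_or_ge i (n+1) with hlt | hge
      · exact le_trans (ihn (by omega) (by omega)) (le_of_lt (hz n (by omega)))
      · have : i = n + 1 := by omega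
        rw [this]
  have hzlo : ∀ j ≤ M, s 0 ≤ z j := fun j hj => le_trans hz0 (hzmono 0 j (Nat.zero_le _) hj)
  have hzhi : ∀ j ≤ M, z j ≤ s r := fun j hj => le_trans (hzmono j M hj (le_refl M)) hzM
  -- for every pair j < M, extract a strict move inside a single piece
  have hK : ∀ j, ∃ k α β, j < M → (k < r ∧ z j ≤ α ∧ α < β ∧ β ≤ z (j+1) ∧
      s k ≤ α ∧ β ≤ s (k+1) ∧
      ((f (z j) < f (z (j+1))) → f α < f β) ∧
      ((f (z (j+1)) < f (z j)) → f β < f α)) := by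
    intro j
    by_cases hj : j < M
    · rcases lt_or_ge (f (z j)) (f (z (j+1))) with hdir | hdir
      · obtain ⟨k, hkr, α, β, h1, h2, h3, h4, h5, h6⟩ :=
          CM_extract f s r hstep hmono (r+1) (z j) (z (j+1))
            (le_trans (Finset.card_filter_le _ _) (by simp))
            (hzlo j (le_of_lt hj)) (hzhi (j+1) hj) (hz j hj) hdir
        exact ⟨k, α, β, fun _ => ⟨hkr, h1, h2, h3, h4, h5, fun _ => h6,
          fun hcon => absurd hdir (not_lt_of_gt hcon)⟩⟩
      · have hdir' : f (z (j+1)) < f (z j) :=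
          lt_of_le_of_ne hdir (fun h => hstrict j hj h.symm)
        obtain ⟨k, hkr, α, β, h1, h2, h3, h4, h5, h6⟩ :=
          CM_extract (fun t => -(f t)) s r hstep (fun k hk => CM_neg (hmono k hk)) (r+1)
            (z j) (z (j+1))
            (le_trans (Finset.card_filter_le _ _) (by simp))
            (hzlo j (le_of_lt hj)) (hzhi (j+1) hj) (hz j hj) (by simpa using hdir')
        refine ⟨k, α, β, fun _ => ⟨hkr, h1, h2, h3, h4, h5, ?_, fun _ => by linarith⟩⟩
        intro hcon
        exact absurd hcon (not_lt_of_gt hdir')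
    · exact ⟨0, 0, 0, fun h => absurd h hj⟩
  choose K A B hspec using hK
  have hadj : ∀ j, j + 2 ≤ M → K j < K (j+1) := by
    intro j hj2
    have hj : j < M := by omega
    have hj1 : j + 1 < M := by omega
    obtain ⟨hkr, hA1, hAB, hB1, hsA, hsB, hdp, hdn⟩ := hspec j hj
    obtain ⟨hkr', hA1', hAB', hB1', hsA', hsB', hdp', hdn'⟩ := hspec (j+1) hj1
    have hle : K j ≤ K (j+1) := by
      by_contra hcon
      push_neg at hcon
      have hss : s (K (j+1) + 1) ≤ s (K j) :=
        CM_smono s r hstep (K (j+1) + 1) (K j) (by omega) (by omega)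
      have c1 : B (j+1) ≤ s (K j) := le_trans hsB' hss
      have c2 : A (j+1) < s (K j) := lt_of_lt_of_le hAB' c1
      have c3 : z (j+1) < s (K j) := lt_of_le_of_lt hA1' c2
      have c4 : B j < s (K j) := lt_of_le_of_lt hB1 c3
      have c5 : A j < s (K j) := lt_trans hAB c4
      linarith [hsA]
    rcases lt_or_eq_of_le hle with h | h
    · exact h
    · exfalso
      -- both moves in the same piece, opposite directions
      have hmemA : A j ∈ Icc (s (K j)) (s (K j + 1)) := ⟨hsA, le_trans (le_of_lt hAB) hsB⟩
      have hmemB : B j ∈ Icc (s (K j)) (s (K j + 1)) := ⟨le_trans hsA (le_of_lt hAB), hsB⟩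
      have hmemA' : A (j+1) ∈ Icc (s (K j)) (s (K j + 1)) := by
        rw [h]; exact ⟨hsA', le_trans (le_of_lt hAB') hsB'⟩
      have hmemB' : B (j+1) ∈ Icc (s (K j)) (s (K j + 1)) := by
        rw [h]; exact ⟨le_trans hsA' (le_of_lt hAB'), hsB'⟩
      rcases halt j hj2 with ⟨hd1, hd2⟩ | ⟨hd1, hd2⟩
      · have m1 : f (A j) < f (B j) := hdp hd1
        have m2 : f (B (j+1)) < f (A (j+1)) := hdn' hd2
        rcases hmono (K j) hkr with hm | ha
        · exact absurd (hm hmemA' hmemB' (le_of_lt hAB')) (not_le_of_gt m2)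
        · exact absurd (ha hmemA hmemB (le_of_lt hAB)) (not_le_of_gt m1)
      · have m1 : f (B j) < f (A j) := hdn hd1
        have m2 : f (A (j+1)) < f (B (j+1)) := hdp' hd2
        rcases hmono (K j) hkr with hm | ha
        · exact absurd (hm hmemA hmemB (le_of_lt hAB)) (not_le_of_gt m1)
        · exact absurd (ha hmemA' hmemB' (le_of_lt hAB')) (not_le_of_gt m2)
  have hKmono : ∀ j j', j < j' → j' < M → K j < K j' := by
    intro j j' hjj hj'M
    induction j' with
    | zero => omega
    | succ n ihn =>
      rcases Nat.lt_or_ge j n with hlt | hge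
      · exact lt_trans (ihn hlt (by omega)) (hadj n (by omega))
      · have : j = n := by omega
        rw [this]
        exact hadj n (by omega)
  have hmaps : ∀ j ∈ Finset.range M, K j ∈ (Finset.range r).filter (fun k => s k < s (k+1)) := by
    intro j hj
    have hjM := Finset.mem_range.mp hj
    obtain ⟨hkr, hA1, hAB, hB1, hsA, hsB, _, _⟩ := hspec j hjM
    exact Finset.mem_filter.mpr ⟨Finset.mem_range.mpr hkr,
      lt_of_le_of_lt hsA (lt_of_lt_of_le hAB hsB)⟩
  have hinj : Set.InjOn K (Finset.range M : Set ℕ) := by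
    intro a ha b hb hab
    simp only [Finset.coe_range, Set.mem_Iio] at ha hb
    by_contra hne
    rcases Nat.lt_or_ge a b with h | h
    · exact absurd hab (ne_of_lt (hKmono a b h hb))
    · have : b < a := by omega
      exact absurd hab.symm (ne_of_lt (hKmono b a this ha))
  calc M = (Finset.range M).card := by simp
    _ ≤ _ := Finset.card_le_card_of_injOn K hmaps hinj

end CMchain

section CMdecomp

def CM_IsDecomp (ψ : ℝ → ℝ) (L : ℕ) (t : ℕ → ℝ) : Prop :=
  t 0 = 0 ∧ t L = 1 ∧ (∀ i < L, t i < t (i+1)) ∧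
  ∀ i < L, MonoOrAntiOn ψ (Icc (t i) (t (i+1)))

lemma CM_decomp_of_PL {ψ : ℝ → ℝ} (hψPL : IsPiecewiseLinear ψ) :
    ∃ L, 0 < L ∧ ∃ t, CM_IsDecomp ψ L t := by
  obtain ⟨m, a, hm, ha0, ham, hlt, haff⟩ := hψPL
  refine ⟨m, hm, a, ha0, ham, hlt, ?_⟩
  intro i hi
  obtain ⟨c, d, hcd⟩ := haff i hi
  rcases le_or_gt 0 c with hc | hc
  · left
    intro x hx y hy hxy
    rw [hcd x hx, hcd y hy]
    have := mul_le_mul_of_nonneg_left hxy hc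
    linarith
  · right
    intro x hx y hy hxy
    rw [hcd x hx, hcd y hy]
    have := mul_le_mul_of_nonpos_left hxy (le_of_lt hc)
    linarith

lemma CM_merge {ψ : ℝ → ℝ} {L : ℕ} {t : ℕ → ℝ} (hd : CM_IsDecomp ψ L t)
    {i : ℕ} (hi1 : 1 ≤ i) (hiL : i < L)
    (hjoin : MonoOrAntiOn ψ (Icc (t (i-1)) (t (i+1)))) :
    ∃ t', CM_IsDecomp ψ (L-1) t' := by
  obtain ⟨h0, hL, hlt, hm⟩ := hd
  refine ⟨fun j => if j < i then t j else t (j+1), ?_, ?_, ?_, ?_⟩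
  · simp only []
    rw [if_pos (by omega)]
    exact h0
  · simp only []
    rw [if_neg (by omega)]
    have : L - 1 + 1 = L := by omega
    rw [this]
    exact hL
  · intro j hj
    simp only []
    rcases Nat.lt_or_ge (j+1) i with h1 | h1
    · rw [if_pos (by omega), if_pos h1]
      exact hlt j (by omega)
    · rcases Nat.lt_or_ge j i with h2 | h2
      · have hji : j + 1 = i := by omega
        rw [if_pos h2, if_neg (by omega)]
        exact lt_trans (hlt j (by omega)) (hlt (j+1) (by omega))
      · rw [if_neg (by omega), if_neg (by omega)]
        exact hlt (j+1) (by omega)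
  · intro j hj
    simp only []
    rcases Nat.lt_or_ge (j+1) i with h1 | h1
    · rw [if_pos (by omega), if_pos h1]
      exact hm j (by omega)
    · rcases Nat.lt_or_ge j i with h2 | h2
      · have hji : j + 1 = i := by omega
        rw [if_pos h2, if_neg (by omega)]
        have e1 : i - 1 = j := by omega
        have e2 : i + 1 = j + 1 + 1 := by omega
        rw [e1, e2] at hjoin
        exact hjoin
      · rw [if_neg (by omega), if_neg (by omega)]
        exact hm (j+1) (by omega)

lemma CM_reduced (ψ : ℝ → ℝ) (hψPL : IsPiecewiseLinear ψ)
    (hnonconst : ¬ ∃ c : ℝ, ∀ x ∈ Icc (0:ℝ) 1, ψ x = c) :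
    ∃ L t, 0 < L ∧ CM_IsDecomp ψ L t ∧
      (∀ i < L, ψ (t i) ≠ ψ (t (i+1))) ∧
      (∀ i, i + 2 ≤ L →
        (ψ (t i) < ψ (t (i+1)) ∧ ψ (t (i+2)) < ψ (t (i+1))) ∨
        (ψ (t (i+1)) < ψ (t i) ∧ ψ (t (i+1)) < ψ (t (i+2)))) := by
  classical
  have hex : ∃ L, 0 < L ∧ ∃ t, CM_IsDecomp ψ L t := CM_decomp_of_PL hψPL
  obtain ⟨hL0, t, hd⟩ := Nat.find_spec hex
  set L := Nat.find hex with hLdef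
  have hd' := hd
  obtain ⟨h0, hL, hlt, hm⟩ := hd'
  have hnm : ∀ i, 1 ≤ i → i < L → ¬ MonoOrAntiOn ψ (Icc (t (i-1)) (t (i+1))) := by
    intro i h1 h2 hj
    obtain ⟨t', hd''⟩ := CM_merge hd h1 h2 hj
    have hlt' : L - 1 < L := by omega
    exact Nat.find_min hex hlt' ⟨by omega, t', hd''⟩
  have hne : ∀ i < L, ψ (t i) ≠ ψ (t (i+1)) := by
    intro i hi heq
    have hle : t i ≤ t (i+1) := le_of_lt (hlt i hi)
    have hconst := CM_const_of_eq hle (hm i hi) heq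
    rcases Nat.lt_or_ge 1 L with hL2 | hL1
    · -- L ≥ 2 : merge the constant piece with a neighbour
      rcases Nat.lt_or_ge 0 i with hi0 | hi0
      · -- merge at i
        apply hnm i (by omega) hi
        have hee : i - 1 + 1 = i := by omega
        have hlt2 := hlt (i-1) (by omega)
        rw [hee] at hlt2
        have hle2 : t (i-1) ≤ t i := le_of_lt hlt2
        have hpm := hm (i-1) (by omega)
        rw [hee] at hpm
        rcases hpm with hmono1 | hanti1
        · exact Or.inl (CM_mono_union hle2 hle hmono1 (CM_const_mono hconst))
        · exact Or.inr (CM_anti_union hle2 hle hanti1 (CM_const_anti hconst))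
      · -- i = 0, merge at 1
        have hi' : i = 0 := by omega
        subst hi'
        apply hnm 1 (le_refl 1) (by omega)
        simp only [Nat.sub_self]
        have hle2 : t 1 ≤ t 2 := le_of_lt (hlt 1 (by omega))
        rcases hm 1 (by omega) with hmono1 | hanti1
        · exact Or.inl (CM_mono_union hle hle2 (CM_const_mono hconst) hmono1)
        · exact Or.inr (CM_anti_union hle hle2 (CM_const_anti hconst) hanti1)
    · -- L = 1 : ψ constant on [0,1], contradiction
      have hL1' : L = 1 := by omega
      have hi' : i = 0 := by omega
      subst hi'
      apply hnonconst
      refine ⟨ψ (t 0), fun x hx => ?_⟩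
      apply hconst
      have h1' : t (0+1) = 1 := by
        have : (0+1 : ℕ) = L := by omega
        rw [this]
        exact hL
      rw [h0, h1']
      exact hx
  refine ⟨L, t, hL0, hd, hne, ?_⟩
  intro i hi2
  rcases lt_trichotomy (ψ (t i)) (ψ (t (i+1))) with ha | ha | ha
  · rcases lt_trichotomy (ψ (t (i+2))) (ψ (t (i+1))) with hb | hb | hb
    · exact Or.inl ⟨ha, hb⟩
    · exact absurd hb.symm (hne (i+1) (by omega))
    · -- both increasing : merge at i+1
      exfalso
      apply hnm (i+1) (by omega) (by omega)
      have hle1 : t i ≤ t (i+1) := le_of_lt (hlt i (by omega))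
      have hle2 : t (i+1) ≤ t (i+2) := le_of_lt (hlt (i+1) (by omega))
      have hm1 : MonotoneOn ψ (Icc (t i) (t (i+1))) := by
        rcases hm i (by omega) with h | h
        · exact h
        · exact absurd (h ⟨le_refl _, hle1⟩ ⟨hle1, le_refl _⟩ hle1) (not_le_of_gt ha)
      have hm2 : MonotoneOn ψ (Icc (t (i+1)) (t (i+2))) := by
        rcases hm (i+1) (by omega) with h | h
        · exact h
        · exact absurd (h ⟨le_refl _, hle2⟩ ⟨hle2, le_refl _⟩ hle2) (not_le_of_gt hb)
      have : MonotoneOn ψ (Icc (t i) (t (i+2))) := CM_mono_union hle1 hle2 hm1 hm2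
      simp only [Nat.add_sub_cancel]
      exact Or.inl this
  · exact absurd ha (hne i (by omega))
  · rcases lt_trichotomy (ψ (t (i+1))) (ψ (t (i+2))) with hb | hb | hb
    · exact Or.inr ⟨ha, hb⟩
    · exact absurd hb (hne (i+1) (by omega))
    · exfalso
      apply hnm (i+1) (by omega) (by omega)
      have hle1 : t i ≤ t (i+1) := le_of_lt (hlt i (by omega))
      have hle2 : t (i+1) ≤ t (i+2) := le_of_lt (hlt (i+1) (by omega))
      have hm1 : AntitoneOn ψ (Icc (t i) (t (i+1))) := by
        rcases hm i (by omega) with h | h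
        · exact absurd (h ⟨le_refl _, hle1⟩ ⟨hle1, le_refl _⟩ hle1) (not_le_of_gt ha)
        · exact h
      have hm2 : AntitoneOn ψ (Icc (t (i+1)) (t (i+2))) := by
        rcases hm (i+1) (by omega) with h | h
        · exact absurd (h ⟨le_refl _, hle2⟩ ⟨hle2, le_refl _⟩ hle2) (not_le_of_gt hb)
        · exact h
      have : AntitoneOn ψ (Icc (t i) (t (i+2))) := CM_anti_union hle1 hle2 hm1 hm2
      simp only [Nat.add_sub_cancel]
      exact Or.inr this

end CMdecomp


section CMcomp

variable {g f : ℝ → ℝ}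

lemma CM_singleton (f : ℝ → ℝ) (a : ℝ) : MonoOrAntiOn f (Icc a a) := by
  left
  intro x hx y hy _
  have hx' : x = a := le_antisymm hx.2 hx.1
  have hy' : y = a := le_antisymm hy.2 hy.1
  rw [hx', hy']

lemma CM_congr {s : Set ℝ} (heq : EqOn f g s) (h : MonoOrAntiOn g s) :
    MonoOrAntiOn f s := by
  rcases h with h | h
  · exact Or.inl (fun x hx y hy hxy => by rw [heq hx, heq hy]; exact h hx hy hxy)
  · exact Or.inr (fun x hx y hy hxy => by rw [heq hx, heq hy]; exact h hx hy hxy)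

lemma CM_comp_mono_g {a b lo hi : ℝ} (hgm : MonotoneOn g (Icc lo hi))
    (hf : MonoOrAntiOn f (Icc a b)) (hvals : ∀ x ∈ Icc a b, f x ∈ Icc lo hi) :
    MonoOrAntiOn (fun x => g (f x)) (Icc a b) := by
  rcases hf with h | h
  · exact Or.inl (fun x hx y hy hxy => hgm (hvals x hx) (hvals y hy) (h hx hy hxy))
  · exact Or.inr (fun x hx y hy hxy => hgm (hvals y hy) (hvals x hx) (h hx hy hxy))

lemma CM_comp_anti_g {a b lo hi : ℝ} (hga : AntitoneOn g (Icc lo hi))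
    (hf : MonoOrAntiOn f (Icc a b)) (hvals : ∀ x ∈ Icc a b, f x ∈ Icc lo hi) :
    MonoOrAntiOn (fun x => g (f x)) (Icc a b) := by
  rcases hf with h | h
  · exact Or.inr (fun x hx y hy hxy => hga (hvals x hx) (hvals y hy) (h hx hy hxy))
  · exact Or.inl (fun x hx y hy hxy => hga (hvals y hy) (hvals x hx) (h hx hy hxy))

end CMcomp

section CMcross

lemma CM_cross {g ψ : ℝ → ℝ} {v : ℝ}
    (hgm : MapsTo g (Icc 0 1) (Icc 0 1))
    (hv : v ∈ Ioo (0:ℝ) 1)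
    (hginc : StrictMonoOn g (Icc 0 v)) (hgdec : StrictAntiOn g (Icc v 1))
    (hg0 : g 0 = 0) (hg1 : g 1 = 0) (hgv : g v = 1)
    (hψc : ContinuousOn ψ (Icc 0 1)) (hψm : MapsTo ψ (Icc 0 1) (Icc 0 1))
    (hcomm : ∀ x ∈ Icc (0:ℝ) 1, ψ (g x) = g (ψ x))
    (u1 u2 : ℝ → ℝ)
    (hu1 : ∀ y ∈ Icc (0:ℝ) 1, u1 y ∈ Icc 0 v ∧ g (u1 y) = y)
    (hu2 : ∀ y ∈ Icc (0:ℝ) 1, u2 y ∈ Icc v 1 ∧ g (u2 y) = y)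
    {L : ℕ} {t : ℕ → ℝ} (hL0 : 0 < L) (hd : CM_IsDecomp ψ L t)
    (hne : ∀ i < L, ψ (t i) ≠ ψ (t (i+1)))
    (halt : ∀ i, i + 2 ≤ L →
      (ψ (t i) < ψ (t (i+1)) ∧ ψ (t (i+2)) < ψ (t (i+1))) ∨
      (ψ (t (i+1)) < ψ (t i) ∧ ψ (t (i+1)) < ψ (t (i+2)))) :
    ∀ i < L, (ψ (t i) < v ∧ v < ψ (t (i+1))) ∨ (ψ (t (i+1)) < v ∧ v < ψ (t i)) := by
  classical
  obtain ⟨ht0, htL, hlt, hmono⟩ := hd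
  set Cross : ℕ → Prop :=
    fun i => (ψ (t i) < v ∧ v < ψ (t (i+1))) ∨ (ψ (t (i+1)) < v ∧ v < ψ (t i)) with hCdef
  intro i₀ hi₀L
  by_contra hnc
  -- basic facts about t
  have htmono : ∀ i j, i ≤ j → j ≤ L → t i ≤ t j :=
    CM_smono t L (fun k hk => le_of_lt (hlt k hk))
  have htmem : ∀ i, i ≤ L → t i ∈ Icc (0:ℝ) 1 := by
    intro i hi
    constructor
    · rw [← ht0]; exact htmono 0 i (Nat.zero_le _) hi
    · rw [← htL]; exact htmono i L hi (le_refl _)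
  -- a non-crossing piece lies on one side of v
  have hside : ∀ i < L, ¬ Cross i →
      (ψ (t i) ≤ v ∧ ψ (t (i+1)) ≤ v) ∨ (v ≤ ψ (t i) ∧ v ≤ ψ (t (i+1))) := by
    intro i hi hc
    rcases le_or_gt (ψ (t i)) v with h1 | h1
    · rcases le_or_gt (ψ (t (i+1))) v with h2 | h2
      · exact Or.inl ⟨h1, h2⟩
      · rcases lt_or_eq_of_le h1 with h1' | h1'
        · exact absurd (Or.inl ⟨h1', h2⟩) hc
        · exact Or.inr ⟨le_of_eq h1'.symm, le_of_lt h2⟩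
    · rcases le_or_gt v (ψ (t (i+1))) with h2 | h2
      · exact Or.inr ⟨le_of_lt h1, h2⟩
      · exact absurd (Or.inr ⟨h2, h1⟩) hc
  -- IVT: crossing pieces have an interior point mapping to v
  have hIVT : ∀ i, i < L → Cross i → ∃ x, t i < x ∧ x < t (i+1) ∧ ψ x = v := by
    intro i hi hc
    have hle : t i ≤ t (i+1) := le_of_lt (hlt i hi)
    have hsub : Icc (t i) (t (i+1)) ⊆ Icc (0:ℝ) 1 :=
      Icc_subset_Icc (htmem i (by omega)).1 (htmem (i+1) (by omega)).2
    have hcont : ContinuousOn ψ (Icc (t i) (t (i+1))) := hψc.mono hsub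
    rcases hc with ⟨h1, h2⟩ | ⟨h1, h2⟩
    · have : v ∈ Icc (ψ (t i)) (ψ (t (i+1))) := ⟨le_of_lt h1, le_of_lt h2⟩
      obtain ⟨x, hx, hψx⟩ := intermediate_value_Icc hle hcont this
      refine ⟨x, ?_, ?_, hψx⟩
      · rcases lt_or_eq_of_le hx.1 with h | h
        · exact h
        · exfalso; rw [← h] at hψx; exact absurd hψx (ne_of_lt h1)
      · rcases lt_or_eq_of_le hx.2 with h | h
        · exact h
        · exfalso; rw [h] at hψx; exact absurd hψx (ne_of_gt h2)
    · have : v ∈ Icc (ψ (t (i+1))) (ψ (t i)) := ⟨le_of_lt h1, le_of_lt h2⟩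
      obtain ⟨x, hx, hψx⟩ := intermediate_value_Icc' hle hcont this
      refine ⟨x, ?_, ?_, hψx⟩
      · rcases lt_or_eq_of_le hx.1 with h | h
        · exact h
        · exfalso; rw [← h] at hψx; exact absurd hψx (ne_of_gt h2)
      · rcases lt_or_eq_of_le hx.2 with h | h
        · exact h
        · exfalso; rw [h] at hψx; exact absurd hψx (ne_of_lt h1)
  -- the refined cut points
  set w : ℕ → ℝ := fun i => if h : i < L ∧ Cross i then (hIVT i h.1 h.2).choose else t i
    with hwdef
  have hw_cross : ∀ i, i < L → Cross i →
      t i < w i ∧ w i < t (i+1) ∧ ψ (w i) = v := by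
    intro i hi hc
    have h : i < L ∧ Cross i := ⟨hi, hc⟩
    simp only [hwdef, dif_pos h]
    exact (hIVT i h.1 h.2).choose_spec
  have hw_not : ∀ i, ¬ (i < L ∧ Cross i) → w i = t i := by
    intro i h
    simp only [hwdef, dif_neg h]
  have hw_mem : ∀ i, i < L → t i ≤ w i ∧ w i ≤ t (i+1) := by
    intro i hi
    by_cases hc : Cross i
    · obtain ⟨h1, h2, _⟩ := hw_cross i hi hc
      exact ⟨le_of_lt h1, le_of_lt h2⟩
    · rw [hw_not i (by tauto)]
      exact ⟨le_refl _, le_of_lt (hlt i hi)⟩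
  -- the refined decomposition of length 2L
  set s : ℕ → ℝ := fun k => if k % 2 = 0 then t (k / 2) else w (k / 2) with hsdef
  have hs_even : ∀ i, s (2*i) = t i := by
    intro i
    simp only [hsdef]
    rw [if_pos (by omega)]
    congr 1
    omega
  have hs_odd : ∀ i, s (2*i+1) = w i := by
    intro i
    simp only [hsdef]
    rw [if_neg (by omega)]
    congr 1
    omega
  have hstep : ∀ k, k < 2*L → s k ≤ s (k+1) := by
    intro k hk
    rcases Nat.even_or_odd k with ⟨i, hi⟩ | ⟨i, hi⟩
    · have e1 : k = 2*i := by omega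
      subst e1
      rw [hs_even, hs_odd]
      exact (hw_mem i (by omega)).1
    · have e1 : k = 2*i+1 := by omega
      subst e1
      have e2 : 2*i+1+1 = 2*(i+1) := by omega
      rw [e2, hs_odd, hs_even]
      exact (hw_mem i (by omega)).2
  -- monotonicity of ψ ∘ g on each refined piece
  have hpsub : ∀ i, i < L → Icc (t i) (t (i+1)) ⊆ Icc (0:ℝ) 1 := by
    intro i hi
    exact Icc_subset_Icc (htmem i (by omega)).1 (htmem (i+1) (by omega)).2
  have hψval : ∀ x ∈ Icc (0:ℝ) 1, ψ x ∈ Icc (0:ℝ) 1 := fun x hx => hψm hx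
  have hgmono : MonotoneOn g (Icc 0 v) := hginc.monotoneOn
  have hganti : AntitoneOn g (Icc v 1) := hgdec.antitoneOn
  -- key: monotone-or-anti of x ↦ g (ψ x) on a subinterval where ψ stays on one side
  have hcomp : ∀ (a b : ℝ), Icc a b ⊆ Icc (0:ℝ) 1 → MonoOrAntiOn ψ (Icc a b) →
      ((∀ x ∈ Icc a b, ψ x ≤ v) ∨ (∀ x ∈ Icc a b, v ≤ ψ x)) →
      MonoOrAntiOn (fun x => ψ (g x)) (Icc a b) := by
    intro a b hsub hψp hsides
    have heq : EqOn (fun x => ψ (g x)) (fun x => g (ψ x)) (Icc a b) :=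
      fun x hx => hcomm x (hsub hx)
    apply CM_congr heq
    rcases hsides with hs | hs
    · exact CM_comp_mono_g hgmono hψp
        (fun x hx => ⟨(hψval x (hsub hx)).1, hs x hx⟩)
    · exact CM_comp_anti_g hganti hψp
        (fun x hx => ⟨hs x hx, (hψval x (hsub hx)).2⟩)
  have hmonos : ∀ k, k < 2*L → MonoOrAntiOn (fun x => ψ (g x)) (Icc (s k) (s (k+1))) := by
    intro k hk
    rcases Nat.even_or_odd k with ⟨i, hi⟩ | ⟨i, hi⟩
    · -- piece [t i, w i]
      have e1 : k = 2*i := by omega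
      subst e1
      rw [hs_even, hs_odd]
      have hiL : i < L := by omega
      by_cases hc : Cross i
      · obtain ⟨hwl, hwr, hwv⟩ := hw_cross i hiL hc
        have hsub2 : Icc (t i) (w i) ⊆ Icc (t i) (t (i+1)) :=
          Icc_subset_Icc (le_refl _) (le_of_lt hwr)
        have hψp : MonoOrAntiOn ψ (Icc (t i) (w i)) :=
          CM_monoOrAntiOn_mono hsub2 (hmono i hiL)
        apply hcomp _ _ (subset_trans hsub2 (hpsub i hiL)) hψp
        rcases le_or_gt (ψ (t i)) v with h1 | h1
        · left
          intro x hx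
          have := (CM_between hψp hx.1 hx.2).2
          rw [hwv] at this
          exact le_trans this (max_le h1 (le_refl v))
        · right
          intro x hx
          have := (CM_between hψp hx.1 hx.2).1
          rw [hwv] at this
          exact le_trans (le_min (le_of_lt h1) (le_refl v)) this
      · rw [hw_not i (by tauto)]
        exact CM_singleton _ _
    · -- piece [w i, t (i+1)]
      have e1 : k = 2*i+1 := by omega
      subst e1
      have e2 : 2*i+1+1 = 2*(i+1) := by omega
      rw [e2, hs_odd, hs_even]
      have hiL : i < L := by omega
      have hsub2 : Icc (w i) (t (i+1)) ⊆ Icc (t i) (t (i+1)) :=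
        Icc_subset_Icc (hw_mem i hiL).1 (le_refl _)
      have hψp : MonoOrAntiOn ψ (Icc (w i) (t (i+1))) :=
        CM_monoOrAntiOn_mono hsub2 (hmono i hiL)
      apply hcomp _ _ (subset_trans hsub2 (hpsub i hiL)) hψp
      by_cases hc : Cross i
      · obtain ⟨hwl, hwr, hwv⟩ := hw_cross i hiL hc
        rcases le_or_gt (ψ (t (i+1))) v with h1 | h1
        · left
          intro x hx
          have := (CM_between hψp hx.1 hx.2).2
          rw [hwv] at this
          exact le_trans this (max_le (le_refl v) h1)
        · right
          intro x hx
          have := (CM_between hψp hx.1 hx.2).1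
          rw [hwv] at this
          exact le_trans (le_min (le_refl v) (le_of_lt h1)) this
      · have hwt : w i = t i := hw_not i (by tauto)
        rcases hside i hiL hc with ⟨h1, h2⟩ | ⟨h1, h2⟩
        · left
          intro x hx
          have := (CM_between hψp hx.1 hx.2).2
          rw [hwt] at this
          exact le_trans this (max_le h1 h2)
        · right
          intro x hx
          have := (CM_between hψp hx.1 hx.2).1
          rw [hwt] at this
          exact le_trans (le_min h1 h2) this
  -- the chain
  set z : ℕ → ℝ := fun j => if j ≤ L then u1 (t j) else u2 (t (2*L - j)) with hzdef
  have hu1mem : ∀ y ∈ Icc (0:ℝ) 1, u1 y ∈ Icc (0:ℝ) 1 := by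
    intro y hy
    obtain ⟨h1, _⟩ := hu1 y hy
    exact ⟨h1.1, le_trans h1.2 (le_of_lt hv.2)⟩
  have hu2mem : ∀ y ∈ Icc (0:ℝ) 1, u2 y ∈ Icc (0:ℝ) 1 := by
    intro y hy
    obtain ⟨h1, _⟩ := hu2 y hy
    exact ⟨le_trans (le_of_lt hv.1) h1.1, h1.2⟩
  have hu1lt : ∀ y ∈ Icc (0:ℝ) 1, ∀ y' ∈ Icc (0:ℝ) 1, y < y' → u1 y < u1 y' := by
    intro y hy y' hy' hyy
    by_contra hcon
    push_neg at hcon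
    have := hgmono (hu1 y' hy').1 (hu1 y hy).1 hcon
    rw [(hu1 y hy).2, (hu1 y' hy').2] at this
    linarith
  have hu2lt : ∀ y ∈ Icc (0:ℝ) 1, ∀ y' ∈ Icc (0:ℝ) 1, y < y' → u2 y' < u2 y := by
    intro y hy y' hy' hyy
    by_contra hcon
    push_neg at hcon
    have := hganti (hu2 y hy).1 (hu2 y' hy').1 hcon
    rw [(hu2 y hy).2, (hu2 y' hy').2] at this
    linarith
  have hu1v : ∀ y ∈ Icc (0:ℝ) 1, y < 1 → u1 y < v := by
    intro y hy hylt
    rcases lt_or_eq_of_le (hu1 y hy).1.2 with h | h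
    · exact h
    · exfalso
      have := (hu1 y hy).2
      rw [h, hgv] at this
      linarith
  have hu2v : ∀ y ∈ Icc (0:ℝ) 1, y < 1 → v < u2 y := by
    intro y hy hylt
    rcases lt_or_eq_of_le (hu2 y hy).1.1 with h | h
    · exact h
    · exfalso
      have := (hu2 y hy).2
      rw [← h, hgv] at this
      linarith
  have hzval : ∀ j, j ≤ 2*L → ψ (g (z j)) = ψ (t (min j (2*L - j))) := by
    intro j hj
    rcases le_or_gt j L with hjL | hjL
    · have : min j (2*L - j) = j := by omega
      rw [this, hzdef]
      simp only [if_pos hjL]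
      rw [(hu1 (t j) (htmem j hjL)).2]
    · have : min j (2*L - j) = 2*L - j := by omega
      rw [this, hzdef]
      simp only [if_neg (by omega : ¬ j ≤ L)]
      rw [(hu2 (t (2*L - j)) (htmem (2*L - j) (by omega))).2]
  have hu1one : u1 1 = v := by
    apply hginc.injOn (hu1 1 ⟨zero_le_one, le_refl 1⟩).1 ⟨le_of_lt hv.1, le_refl v⟩
    rw [(hu1 1 ⟨zero_le_one, le_refl 1⟩).2, hgv]
  have hu1zero : u1 0 = 0 := by
    apply hginc.injOn (hu1 0 ⟨le_refl 0, zero_le_one⟩).1 ⟨le_refl 0, le_of_lt hv.1⟩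
    rw [(hu1 0 ⟨le_refl 0, zero_le_one⟩).2, hg0]
  have hu2zero : u2 0 = 1 := by
    apply hgdec.injOn (hu2 0 ⟨le_refl 0, zero_le_one⟩).1 ⟨le_of_lt hv.2, le_refl 1⟩
    rw [(hu2 0 ⟨le_refl 0, zero_le_one⟩).2, hg1]
  have hzmono : ∀ j, j < 2*L → z j < z (j+1) := by
    intro j hj
    rcases Nat.lt_or_ge j L with hjL | hjL
    · simp only [hzdef, if_pos (le_of_lt hjL), if_pos (by omega : j + 1 ≤ L)]
      exact hu1lt (t j) (htmem j (by omega)) (t (j+1)) (htmem (j+1) (by omega))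
        (hlt j hjL)
    · rcases Nat.eq_or_lt_of_le hjL with hjeq | hjgt
      · -- j = L : seam
        have hjeq' : j = L := hjeq.symm
        rw [hjeq']
        simp only [hzdef, if_pos (le_refl L), if_neg (by omega : ¬ L + 1 ≤ L)]
        rw [htL, hu1one]
        apply hu2v
        · exact htmem _ (by omega)
        · have e : 2*L - (L+1) = L - 1 := by omega
          rw [e, ← htL]
          have := hlt (L-1) (by omega)
          have e2 : L - 1 + 1 = L := by omega
          rwa [e2] at this
      · simp only [hzdef, if_neg (by omega : ¬ j ≤ L), if_neg (by omega : ¬ j + 1 ≤ L)]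
        apply hu2lt
        · exact htmem _ (by omega)
        · exact htmem _ (by omega)
        · have e : 2*L - j = (2*L - (j+1)) + 1 := by omega
          rw [e]
          exact hlt (2*L - (j+1)) (by omega)
  -- apply the chain/piece-count lemma
  have hz0 : s 0 ≤ z 0 := by
    have e0 : s 0 = t 0 := by
      have := hs_even 0
      simpa using this
    have ez : z 0 = u1 (t 0) := by simp [hzdef]
    rw [e0, ez, ht0, hu1zero]
  have hzM : z (2*L) ≤ s (2*L) := by
    have e0 : s (2*L) = t L := hs_even L
    have ez : z (2*L) = u2 (t 0) := by
      simp only [hzdef, if_neg (by omega : ¬ 2*L ≤ L)]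
      congr 1
      congr 1
      omega
    rw [e0, ez, ht0, hu2zero, htL]
  have hstrict : ∀ j, j < 2*L → ψ (g (z j)) ≠ ψ (g (z (j+1))) := by
    intro j hj
    rw [hzval j (by omega), hzval (j+1) (by omega)]
    rcases Nat.lt_or_ge j L with hjL | hjL
    · have e1 : min j (2*L - j) = j := by omega
      have e2 : min (j+1) (2*L - (j+1)) = j+1 := by omega
      rw [e1, e2]
      exact hne j hjL
    · have e1 : min j (2*L - j) = (2*L - (j+1)) + 1 := by omega
      have e2 : min (j+1) (2*L - (j+1)) = 2*L - (j+1) := by omega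
      rw [e1, e2]
      exact (hne (2*L - (j+1)) (by omega)).symm
  have haltz : ∀ j, j + 2 ≤ 2*L →
      (ψ (g (z j)) < ψ (g (z (j+1))) ∧ ψ (g (z (j+2))) < ψ (g (z (j+1)))) ∨
      (ψ (g (z (j+1))) < ψ (g (z j)) ∧ ψ (g (z (j+1))) < ψ (g (z (j+2)))) := by
    intro j hj
    rw [hzval j (by omega), hzval (j+1) (by omega), hzval (j+2) (by omega)]
    rcases Nat.lt_or_ge (j+2) L with hc1 | hc1
    · have e1 : min j (2*L - j) = j := by omega
      have e2 : min (j+1) (2*L - (j+1)) = j+1 := by omega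
      have e3 : min (j+2) (2*L - (j+2)) = j+2 := by omega
      rw [e1, e2, e3]
      exact halt j (by omega)
    · rcases Nat.lt_or_ge j L with hc2 | hc2
      · rcases Nat.eq_or_lt_of_le (by omega : j + 1 ≤ L) with hc3 | hc3
        · -- j + 1 = L : center
          have e1 : min j (2*L - j) = j := by omega
          have e2 : min (j+1) (2*L - (j+1)) = j+1 := by omega
          have e3 : min (j+2) (2*L - (j+2)) = j := by omega
          rw [e1, e2, e3]
          rcases lt_or_gt_of_ne (hne j hc2) with h | h
          · exact Or.inl ⟨h, h⟩
          · exact Or.inr ⟨h, h⟩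
        · -- j + 2 = L
          have hjL : j + 2 = L := by omega
          have e1 : min j (2*L - j) = j := by omega
          have e2 : min (j+1) (2*L - (j+1)) = j+1 := by omega
          have e3 : min (j+2) (2*L - (j+2)) = j+2 := by omega
          rw [e1, e2, e3]
          exact halt j (by omega)
      · -- j ≥ L : mirrored
        set b := 2*L - (j+2) with hbdef
        have e1 : min j (2*L - j) = b + 2 := by omega
        have e2 : min (j+1) (2*L - (j+1)) = b + 1 := by omega
        have e3 : min (j+2) (2*L - (j+2)) = b := by omega
        rw [e1, e2, e3]
        rcases halt b (by omega) with ⟨h1, h2⟩ | ⟨h1, h2⟩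
        · exact Or.inl ⟨h2, h1⟩
        · exact Or.inr ⟨h2, h1⟩
  have hcount := CM_pairs (fun x => ψ (g x)) s (2*L) hstep hmonos z (2*L)
    hzmono hz0 hzM hstrict haltz
  -- but the filter misses the degenerate piece 2*i₀
  have hdeg : s (2*i₀) = s (2*i₀+1) := by
    rw [hs_even, hs_odd, hw_not i₀ (by tauto)]
  have hsubf : (Finset.range (2*L)).filter (fun k => s k < s (k+1)) ⊆
      (Finset.range (2*L)).erase (2*i₀) := by
    intro k hk
    have hk' := Finset.mem_filter.mp hk
    refine Finset.mem_erase.mpr ⟨?_, hk'.1⟩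
    intro heq
    rw [heq] at hk'
    have : s (2*i₀) < s (2*i₀+1) := hk'.2
    rw [hdeg] at this
    exact lt_irrefl _ this
  have hcard : ((Finset.range (2*L)).filter (fun k => s k < s (k+1))).card ≤ 2*L - 1 := by
    have h1 := Finset.card_le_card hsubf
    have h2 : ((Finset.range (2*L)).erase (2*i₀)).card = 2*L - 1 := by
      rw [Finset.card_erase_of_mem (Finset.mem_range.mpr (by omega))]
      simp
    omega
  omega

end CMcross

section CMfinal

lemma CM_g_zero {g : ℝ → ℝ} {v : ℝ} (hv : v ∈ Ioo (0:ℝ) 1)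
    (hginc : StrictMonoOn g (Icc 0 v)) (hgdec : StrictAntiOn g (Icc v 1))
    (hg0 : g 0 = 0) (hg1 : g 1 = 0) :
    ∀ x ∈ Icc (0:ℝ) 1, (g x = 0 ↔ x = 0 ∨ x = 1) := by
  intro x hx
  constructor
  · intro h
    by_contra hcon
    push_neg at hcon
    have hx0 : 0 < x := lt_of_le_of_ne hx.1 (Ne.symm hcon.1)
    have hx1 : x < 1 := lt_of_le_of_ne hx.2 hcon.2
    rcases le_total x v with hxv | hvx
    · have := hginc ⟨le_refl 0, le_of_lt hv.1⟩ ⟨le_of_lt hx0, hxv⟩ hx0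
      rw [hg0, h] at this
      exact lt_irrefl 0 this
    · have := hgdec ⟨hvx, hx.2⟩ ⟨le_of_lt hv.2, le_refl 1⟩ hx1
      rw [hg1, h] at this
      exact lt_irrefl 0 this
  · rintro (h | h) <;> rw [h] <;> assumption

lemma CM_g_one {g : ℝ → ℝ} {v : ℝ} (hv : v ∈ Ioo (0:ℝ) 1)
    (hginc : StrictMonoOn g (Icc 0 v)) (hgdec : StrictAntiOn g (Icc v 1))
    (hgv : g v = 1) :
    ∀ x ∈ Icc (0:ℝ) 1, (g x = 1 ↔ x = v) := by
  intro x hx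
  constructor
  · intro h
    by_contra hcon
    rcases lt_or_gt_of_ne hcon with hlt | hgt
    · have := hginc ⟨hx.1, le_of_lt hlt⟩ ⟨le_of_lt hv.1, le_refl v⟩ hlt
      rw [hgv, h] at this
      exact lt_irrefl 1 this
    · have := hgdec ⟨le_refl v, le_of_lt hv.2⟩ ⟨le_of_lt hgt, hx.2⟩ hgt
      rw [hgv, h] at this
      exact lt_irrefl 1 this
  · intro h; rw [h, hgv]

lemma CM_final {g ψ : ℝ → ℝ} {v : ℝ}
    (hgm : MapsTo g (Icc 0 1) (Icc 0 1))
    (hv : v ∈ Ioo (0:ℝ) 1)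
    (hginc : StrictMonoOn g (Icc 0 v)) (hgdec : StrictAntiOn g (Icc v 1))
    (hg0 : g 0 = 0) (hg1 : g 1 = 0) (hgv : g v = 1)
    (hψc : ContinuousOn ψ (Icc 0 1)) (hψm : MapsTo ψ (Icc 0 1) (Icc 0 1))
    (hcomm : ∀ x ∈ Icc (0:ℝ) 1, ψ (g x) = g (ψ x))
    (u1 u2 : ℝ → ℝ)
    (hu1 : ∀ y ∈ Icc (0:ℝ) 1, u1 y ∈ Icc 0 v ∧ g (u1 y) = y)
    (hu2 : ∀ y ∈ Icc (0:ℝ) 1, u2 y ∈ Icc v 1 ∧ g (u2 y) = y)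
    {L : ℕ} {t : ℕ → ℝ} (hL0 : 0 < L) (hd : CM_IsDecomp ψ L t)
    (hne : ∀ i < L, ψ (t i) ≠ ψ (t (i+1)))
    (hcross : ∀ i < L,
      (ψ (t i) < v ∧ v < ψ (t (i+1))) ∨ (ψ (t (i+1)) < v ∧ v < ψ (t i)))
    (hp0 : 0 < ψ 0) (hp1 : ψ 0 < 1) (hq0 : 0 < ψ 1) (hq1 : ψ 1 < 1) :
    False := by
  classical
  obtain ⟨ht0, htL, hlt, hmono⟩ := hd
  have htmono : ∀ i j, i ≤ j → j ≤ L → t i ≤ t j :=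
    CM_smono t L (fun k hk => le_of_lt (hlt k hk))
  have htmem : ∀ i, i ≤ L → t i ∈ Icc (0:ℝ) 1 := by
    intro i hi
    constructor
    · rw [← ht0]; exact htmono 0 i (Nat.zero_le _) hi
    · rw [← htL]; exact htmono i L hi (le_refl _)
  have hpsub : ∀ i, i < L → Icc (t i) (t (i+1)) ⊆ Icc (0:ℝ) 1 := by
    intro i hi
    exact Icc_subset_Icc (htmem i (by omega)).1 (htmem (i+1) (by omega)).2
  have h01 : (0:ℝ) ∈ Icc (0:ℝ) 1 := ⟨le_refl 0, zero_le_one⟩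
  have h11 : (1:ℝ) ∈ Icc (0:ℝ) 1 := ⟨zero_le_one, le_refl 1⟩
  have hv01 : v ∈ Icc (0:ℝ) 1 := ⟨le_of_lt hv.1, le_of_lt hv.2⟩
  have hgz := CM_g_zero hv hginc hgdec hg0 hg1
  have hgo := CM_g_one hv hginc hgdec hgv
  -- the two identities
  have hVid : ∀ x ∈ Icc (0:ℝ) 1, (ψ x = v ↔ ψ (g x) = 1) := by
    intro x hx
    rw [hcomm x hx]
    constructor
    · intro h; rw [h, hgv]
    · intro h
      exact (hgo (ψ x) (hψm hx)).mp h
  have hFid : ∀ x ∈ Icc (0:ℝ) 1, ((ψ x = 0 ∨ ψ x = 1) ↔ ψ (g x) = 0) := by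
    intro x hx
    rw [hcomm x hx]
    constructor
    · rintro (h | h) <;> rw [h] <;> assumption
    · intro h
      exact (hgz (ψ x) (hψm hx)).mp h
  -- locator
  have hloc : ∀ x ∈ Icc (0:ℝ) 1, ∃ i, i < L ∧ t i ≤ x ∧ x ≤ t (i+1) := by
    intro x hx
    set k := Nat.findGreatest (fun i => t i ≤ x) L with hkdef
    have hkle : k ≤ L := Nat.findGreatest_le L
    have hkx : t k ≤ x :=
      Nat.findGreatest_spec (P := fun i => t i ≤ x) (Nat.zero_le L)
        (by show t 0 ≤ x; rw [ht0]; exact hx.1)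
    rcases Nat.eq_or_lt_of_le hkle with hkeq | hklt
    · refine ⟨L - 1, by omega, ?_, ?_⟩
      · have e : t L ≤ x := by rw [← hkeq]; exact hkx
        have hx1 : x = 1 := le_antisymm hx.2 (by rw [← htL]; exact e)
        rw [hx1, ← htL]
        exact htmono (L-1) L (by omega) (le_refl _)
      · have e2 : L - 1 + 1 = L := by omega
        rw [e2, htL]
        exact hx.2
    · refine ⟨k, hklt, hkx, ?_⟩
      by_contra hcon
      push_neg at hcon
      exact Nat.findGreatest_is_greatest (P := fun i => t i ≤ x) (n := L)
        (by omega) (by omega) (le_of_lt hcon)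
  -- value of ψ at interior points is bounded by endpoint values of the piece
  have hbetween : ∀ i, i < L → ∀ x, t i ≤ x → x ≤ t (i+1) →
      min (ψ (t i)) (ψ (t (i+1))) ≤ ψ x ∧ ψ x ≤ max (ψ (t i)) (ψ (t (i+1))) := by
    intro i hi x hx1 hx2
    exact CM_between (hmono i hi) hx1 hx2
  -- windows
  set Φ : ℕ → Set ℝ := fun i => {x | x ∈ Icc (t (i-1)) (t (i+1)) ∧ ψ x = ψ (t i)}
    with hΦdef
  have hΦne : ∀ i, 0 < i → i < L → t i ∈ Φ i := by
    intro i h1 h2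
    exact ⟨⟨htmono (i-1) i (by omega) (by omega), htmono i (i+1) (by omega) (by omega)⟩, rfl⟩
  have hΦ01 : ∀ i, 0 < i → i < L → Φ i ⊆ Icc (0:ℝ) 1 := by
    intro i h1 h2 x hx
    exact ⟨le_trans (htmem (i-1) (by omega)).1 hx.1.1,
      le_trans hx.1.2 (htmem (i+1) (by omega)).2⟩
  have hΦconv : ∀ i, 0 < i → i < L → ∀ x ∈ Φ i, ∀ y ∈ Φ i, ∀ z, x ≤ z → z ≤ y → z ∈ Φ i := by
    intro i h1 h2 x hx y hy z hxz hzy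
    refine ⟨⟨le_trans hx.1.1 hxz, le_trans hzy hy.1.2⟩, ?_⟩
    have hee : i - 1 + 1 = i := by omega
    rcases le_total z (t i) with hzi | hiz
    · have hpm := hmono (i-1) (by omega)
      rw [hee] at hpm
      have hxm : x ∈ Icc (t (i-1)) (t i) := ⟨hx.1.1, le_trans hxz hzi⟩
      have htim : t i ∈ Icc (t (i-1)) (t i) :=
        ⟨htmono (i-1) i (by omega) (by omega), le_refl _⟩
      exact CM_level_conv hpm hxm htim hx.2 rfl hxz hzi
    · have hpm := hmono i h2
      have hym : y ∈ Icc (t i) (t (i+1)) := ⟨le_trans hiz hzy, hy.1.2⟩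
      have htim : t i ∈ Icc (t i) (t (i+1)) :=
        ⟨le_refl _, htmono i (i+1) (by omega) (by omega)⟩
      exact CM_level_conv hpm htim hym rfl hy.2 hiz hzy
  have hΦlt : ∀ i, 0 < i → i < L → ∀ a ∈ Φ i, a < t (i+1) := by
    intro i h1 h2 a ha
    rcases lt_or_eq_of_le ha.1.2 with h | h
    · exact h
    · exfalso
      have : ψ (t (i+1)) = ψ (t i) := by rw [← h]; exact ha.2
      exact hne i h2 this.symm
  have hΦgt : ∀ i, 0 < i → i < L → ∀ a ∈ Φ i, t (i-1) < a := by
    intro i h1 h2 a ha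
    rcases lt_or_eq_of_le ha.1.1 with h | h
    · exact h
    · exfalso
      have he : ψ (t (i-1)) = ψ (t i) := by rw [h]; exact ha.2
      have hee : i - 1 + 1 = i := by omega
      have := hne (i-1) (by omega)
      rw [hee] at this
      exact this he
  -- covering of an extreme level
  have hΦcover : ∀ w : ℝ, (w = 0 ∨ w = 1) → ψ 0 ≠ w → ψ 1 ≠ w →
      ∀ x ∈ Icc (0:ℝ) 1, ψ x = w →
      ∃ i, 0 < i ∧ i < L ∧ ψ (t i) = w ∧ x ∈ Φ i := by
    intro w hw hps0 hps1 x hx hψx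
    obtain ⟨i₀, hi₀, hx1, hx2⟩ := hloc x hx
    have hm0 : (0:ℝ) ≤ ψ (t i₀) := (hψm (htmem i₀ (by omega))).1
    have hm0' : (0:ℝ) ≤ ψ (t (i₀+1)) := (hψm (htmem (i₀+1) (by omega))).1
    have hm1 : ψ (t i₀) ≤ 1 := (hψm (htmem i₀ (by omega))).2
    have hm1' : ψ (t (i₀+1)) ≤ 1 := (hψm (htmem (i₀+1) (by omega))).2
    have hj : ψ (t i₀) = w ∨ ψ (t (i₀+1)) = w := by
      have hb := hbetween i₀ hi₀ x hx1 hx2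
      rw [hψx] at hb
      rcases hw with hw | hw
      · subst hw
        rcases le_total (ψ (t i₀)) (ψ (t (i₀+1))) with hc | hc
        · left
          have := hb.1
          rw [min_eq_left hc] at this
          linarith
        · right
          have := hb.1
          rw [min_eq_right hc] at this
          linarith
      · subst hw
        rcases le_total (ψ (t i₀)) (ψ (t (i₀+1))) with hc | hc
        · right
          have := hb.2
          rw [max_eq_right hc] at this
          linarith
        · left
          have := hb.2
          rw [max_eq_left hc] at this
          linarith
    rcases hj with hj | hj
    · have hi0pos : 0 < i₀ := by
        rcases Nat.eq_zero_or_pos i₀ with h | h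
        · exfalso
          rw [h, ht0] at hj
          exact hps0 hj
        · exact h
      refine ⟨i₀, hi0pos, hi₀, hj, ⟨⟨?_, hx2⟩, hψx.trans hj.symm⟩⟩
      exact le_trans (htmono (i₀-1) i₀ (by omega) (by omega)) hx1
    · have hi1L : i₀ + 1 < L := by
        rcases Nat.lt_or_ge (i₀+1) L with h | h
        · exact h
        · exfalso
          have heq : i₀ + 1 = L := by omega
          rw [heq, htL] at hj
          exact hps1 hj
      refine ⟨i₀+1, by omega, hi1L, hj, ⟨⟨?_, ?_⟩, hψx.trans hj.symm⟩⟩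
      · simp only [Nat.add_sub_cancel]
        exact hx1
      · exact le_trans hx2 (htmono (i₀+1) (i₀+2) (by omega) (by omega))
  -- separation between windows
  have hΦsep : ∀ i i', 0 < i → i < L → 0 < i' → i' < L → i < i' →
      (ψ (t i) = 0 ∨ ψ (t i) = 1) → (ψ (t i') = 0 ∨ ψ (t i') = 1) →
      ∀ a ∈ Φ i, ∀ a' ∈ Φ i',
      ∃ ξ, ξ ∈ Icc (0:ℝ) 1 ∧ 0 < ψ ξ ∧ ψ ξ < 1 ∧ a < ξ ∧ ξ < a' := by
    intro i i' hi0 hiL hi'0 hi'L hii' hwi hwi' a ha a' ha'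
    by_cases hB : ψ (t (i+1)) = 0 ∨ ψ (t (i+1)) = 1
    · have hvals : (ψ (t i) = 0 ∧ ψ (t (i+1)) = 1) ∨ (ψ (t i) = 1 ∧ ψ (t (i+1)) = 0) := by
        rcases hwi with h0 | h1 <;> rcases hB with h0' | h1'
        · exact absurd (h0.trans h0'.symm) (hne i hiL)
        · exact Or.inl ⟨h0, h1'⟩
        · exact Or.inr ⟨h1, h0'⟩
        · exact absurd (h1.trans h1'.symm) (hne i hiL)
      have hcont : ContinuousOn ψ (Icc (t i) (t (i+1))) := hψc.mono (hpsub i hiL)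
      have hle : t i ≤ t (i+1) := le_of_lt (hlt i hiL)
      have hψp := hmono i hiL
      have hξ : ∃ ξ, t i ≤ ξ ∧ ξ ≤ t (i+1) ∧ ψ ξ = 1/2 := by
        rcases hvals with ⟨h0, h1'⟩ | ⟨h1, h0'⟩
        · obtain ⟨ξ, hξm, hξv⟩ := intermediate_value_Icc hle hcont
            (show (1/2:ℝ) ∈ Icc (ψ (t i)) (ψ (t (i+1))) by
              rw [h0, h1']; constructor <;> norm_num)
          exact ⟨ξ, hξm.1, hξm.2, hξv⟩
        · obtain ⟨ξ, hξm, hξv⟩ := intermediate_value_Icc' hle hcont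
            (show (1/2:ℝ) ∈ Icc (ψ (t (i+1))) (ψ (t i)) by
              rw [h1, h0']; constructor <;> norm_num)
          exact ⟨ξ, hξm.1, hξm.2, hξv⟩
      obtain ⟨ξ, hξ1, hξ2, hξv⟩ := hξ
      have hξ01 : ξ ∈ Icc (0:ℝ) 1 := hpsub i hiL ⟨hξ1, hξ2⟩
      refine ⟨ξ, hξ01, by rw [hξv]; norm_num, by rw [hξv]; norm_num, ?_, ?_⟩
      · by_contra hcon
        push_neg at hcon
        have hψp' : MonoOrAntiOn ψ (Icc ξ (t (i+1))) :=
          CM_monoOrAntiOn_mono (Icc_subset_Icc hξ1 (le_refl _)) hψp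
        have hb := CM_between hψp' hcon ha.1.2
        rw [hξv, ha.2] at hb
        rcases hvals with ⟨h0, h1'⟩ | ⟨h1, h0'⟩
        · rw [h0, h1'] at hb
          rcases min_le_iff.mp hb.1 with h | h <;> linarith
        · rw [h1, h0'] at hb
          rcases le_max_iff.mp hb.2 with h | h <;> linarith
      · rcases Nat.eq_or_lt_of_le (show i + 1 ≤ i' by omega) with hie | hie
        · -- i' = i+1
          by_contra hcon
          push_neg at hcon
          have ha'low : t i ≤ a' := by
            have := ha'.1.1
            rw [← hie] at this
            simpa using this
          have hψp' : MonoOrAntiOn ψ (Icc (t i) ξ) :=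
            CM_monoOrAntiOn_mono (Icc_subset_Icc (le_refl _) hξ2) hψp
          have hb := CM_between hψp' ha'low hcon
          have ha'val : ψ a' = ψ (t (i+1)) := by rw [ha'.2, ← hie]
          rw [hξv, ha'val] at hb
          rcases hvals with ⟨h0, h1'⟩ | ⟨h1, h0'⟩
          · rw [h0, h1'] at hb
            rcases le_max_iff.mp hb.2 with h | h <;> linarith
          · rw [h1, h0'] at hb
            rcases min_le_iff.mp hb.1 with h | h <;> linarith
        · -- i' ≥ i+2
          have h1 : ξ ≤ t (i+1) := hξ2
          have h2 : t (i+1) ≤ t (i'-1) := htmono (i+1) (i'-1) (by omega) (by omega)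
          have h3 : t (i'-1) < a' := hΦgt i' hi'0 hi'L a' ha'
          linarith
    · -- ψ (t (i+1)) is strictly between 0 and 1 : use t (i+1) as separator
      push_neg at hB
      have hii2 : i + 1 < i' := by
        rcases Nat.eq_or_lt_of_le (show i + 1 ≤ i' by omega) with hie | hie
        · exfalso
          rcases hwi' with h | h
          · exact hB.1 (by rw [hie]; exact h)
          · exact hB.2 (by rw [hie]; exact h)
        · exact hie
      have hmem : ψ (t (i+1)) ∈ Icc (0:ℝ) 1 := hψm (htmem (i+1) (by omega))
      refine ⟨t (i+1), htmem (i+1) (by omega),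
        lt_of_le_of_ne hmem.1 (Ne.symm hB.1), lt_of_le_of_ne hmem.2 hB.2, ?_, ?_⟩
      · exact hΦlt i hi0 hiL a ha
      · have h2 : t (i+1) ≤ t (i'-1) := htmono (i+1) (i'-1) (by omega) (by omega)
        have h3 : t (i'-1) < a' := hΦgt i' hi'0 hi'L a' ha'
        linarith
  -- branch inverse helpers
  have hu1mem : ∀ y ∈ Icc (0:ℝ) 1, u1 y ∈ Icc (0:ℝ) 1 := fun y hy =>
    ⟨(hu1 y hy).1.1, le_trans (hu1 y hy).1.2 (le_of_lt hv.2)⟩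
  have hu2mem : ∀ y ∈ Icc (0:ℝ) 1, u2 y ∈ Icc (0:ℝ) 1 := fun y hy =>
    ⟨le_trans (le_of_lt hv.1) (hu2 y hy).1.1, (hu2 y hy).1.2⟩
  have hgmono : MonotoneOn g (Icc 0 v) := hginc.monotoneOn
  have hganti : AntitoneOn g (Icc v 1) := hgdec.antitoneOn
  have hx01l : ∀ x ∈ Icc (0:ℝ) v, x ∈ Icc (0:ℝ) 1 := fun x hx =>
    ⟨hx.1, le_trans hx.2 hv.2.le⟩
  have hx01r : ∀ x ∈ Icc v (1:ℝ), x ∈ Icc (0:ℝ) 1 := fun x hx =>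
    ⟨le_trans hv.1.le hx.1, hx.2⟩
  have hu1gx : ∀ x ∈ Icc (0:ℝ) v, u1 (g x) = x := by
    intro x hx
    have hg01 : g x ∈ Icc (0:ℝ) 1 := hgm (hx01l x hx)
    exact hginc.injOn (hu1 (g x) hg01).1 hx (hu1 (g x) hg01).2
  have hu2gx : ∀ x ∈ Icc v (1:ℝ), u2 (g x) = x := by
    intro x hx
    have hg01 : g x ∈ Icc (0:ℝ) 1 := hgm (hx01r x hx)
    exact hgdec.injOn (hu2 (g x) hg01).1 hx (hu2 (g x) hg01).2
  have hu1lt : ∀ y ∈ Icc (0:ℝ) 1, ∀ y' ∈ Icc (0:ℝ) 1, y < y' → u1 y < u1 y' := by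
    intro y hy y' hy' hyy
    by_contra hcon
    push_neg at hcon
    have := hgmono (hu1 y' hy').1 (hu1 y hy).1 hcon
    rw [(hu1 y hy).2, (hu1 y' hy').2] at this
    linarith
  have hu2lt : ∀ y ∈ Icc (0:ℝ) 1, ∀ y' ∈ Icc (0:ℝ) 1, y < y' → u2 y' < u2 y := by
    intro y hy y' hy' hyy
    by_contra hcon
    push_neg at hcon
    have := hganti (hu2 y hy).1 (hu2 y' hy').1 hcon
    rw [(hu2 y hy).2, (hu2 y' hy').2] at this
    linarith
  -- endpoint values of pieces never equal v
  have htv : ∀ k, k ≤ L → ψ (t k) ≠ v := by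
    intro k hk
    rcases Nat.lt_or_ge k L with h | h
    · rcases hcross k h with ⟨h1, h2⟩ | ⟨h1, h2⟩
      · exact ne_of_lt h1
      · exact ne_of_gt h2
    · have hkL : k = L := by omega
      subst hkL
      have hee : k - 1 + 1 = k := by omega
      have hc := hcross (k-1) (by omega)
      rw [hee] at hc
      rcases hc with ⟨h1, h2⟩ | ⟨h1, h2⟩
      · exact ne_of_gt h2
      · exact ne_of_lt h1
  have hVIVT : ∀ i, i < L → ∃ x, t i < x ∧ x < t (i+1) ∧ ψ x = v := by
    intro i hi
    have hle : t i ≤ t (i+1) := le_of_lt (hlt i hi)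
    have hcont : ContinuousOn ψ (Icc (t i) (t (i+1))) := hψc.mono (hpsub i hi)
    rcases hcross i hi with ⟨h1, h2⟩ | ⟨h1, h2⟩
    · obtain ⟨x, hxm, hψx⟩ := intermediate_value_Icc hle hcont ⟨le_of_lt h1, le_of_lt h2⟩
      refine ⟨x, ?_, ?_, hψx⟩
      · rcases lt_or_eq_of_le hxm.1 with h | h
        · exact h
        · exfalso; rw [← h] at hψx; exact (ne_of_lt h1) hψx
      · rcases lt_or_eq_of_le hxm.2 with h | h
        · exact h
        · exfalso; rw [h] at hψx; exact (ne_of_gt h2) hψx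
    · obtain ⟨x, hxm, hψx⟩ := intermediate_value_Icc' hle hcont ⟨le_of_lt h1, le_of_lt h2⟩
      refine ⟨x, ?_, ?_, hψx⟩
      · rcases lt_or_eq_of_le hxm.1 with h | h
        · exact h
        · exfalso; rw [← h] at hψx; exact (ne_of_gt h2) hψx
      · rcases lt_or_eq_of_le hxm.2 with h | h
        · exact h
        · exfalso; rw [h] at hψx; exact (ne_of_lt h1) hψx
  -- the index sets
  set P0 : Finset ℕ := (Finset.range (L+1)).filter (fun i => 0 < i ∧ i < L ∧ ψ (t i) = 0)
    with hP0def
  set P1 : Finset ℕ := (Finset.range (L+1)).filter (fun i => 0 < i ∧ i < L ∧ ψ (t i) = 1)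
    with hP1def
  have hP0mem : ∀ j, j ∈ P0 ↔ 0 < j ∧ j < L ∧ ψ (t j) = 0 := by
    intro j
    simp only [hP0def, Finset.mem_filter, Finset.mem_range]
    exact ⟨fun h => h.2, fun h => ⟨by omega, h⟩⟩
  have hP1mem : ∀ j, j ∈ P1 ↔ 0 < j ∧ j < L ∧ ψ (t j) = 1 := by
    intro j
    simp only [hP1def, Finset.mem_filter, Finset.mem_range]
    exact ⟨fun h => h.2, fun h => ⟨by omega, h⟩⟩
  -- FIRST zone application : level v
  set S1 : Set ℝ := {x | x ∈ Icc (0:ℝ) 1 ∧ ψ x = v} with hS1def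
  have hvnotS1 : v ∉ S1 := by
    intro hvS
    have h := (hVid v hv01).mp hvS.2
    rw [hgv] at h
    exact (ne_of_lt hq1) h
  have happ1 : Fintype.card (Fin L) = Fintype.card (Bool × {j // j ∈ P1}) := by
    apply CM_zone S1
      (fun i : Fin L => {x | x ∈ Icc (t i.val) (t (i.val+1)) ∧ ψ x = v})
      (fun bj : Bool × {j // j ∈ P1} =>
        {x | x ∈ cond bj.1 (Icc v 1) (Icc 0 v) ∧ g x ∈ Φ bj.2.val})
    · intro x hx
      obtain ⟨i, hiL, h1, h2⟩ := hloc x hx.1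
      exact ⟨⟨i, hiL⟩, ⟨⟨h1, h2⟩, hx.2⟩⟩
    · rintro ⟨i, hiL⟩ x hx
      exact ⟨hpsub i hiL hx.1, hx.2⟩
    · intro x hx
      have hgx1 : ψ (g x) = 1 := (hVid x hx.1).mp hx.2
      have hgx01 : g x ∈ Icc (0:ℝ) 1 := hgm hx.1
      obtain ⟨j, hj0, hjL, hjv, hjmem⟩ :=
        hΦcover 1 (Or.inr rfl) (ne_of_lt hp1) (ne_of_lt hq1) (g x) hgx01 hgx1
      have hjP : j ∈ P1 := (hP1mem j).mpr ⟨hj0, hjL, hjv⟩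
      rcases le_total x v with hxv | hvx
      · exact ⟨⟨false, ⟨j, hjP⟩⟩, ⟨⟨hx.1.1, hxv⟩, hjmem⟩⟩
      · exact ⟨⟨true, ⟨j, hjP⟩⟩, ⟨⟨hvx, hx.1.2⟩, hjmem⟩⟩
    · rintro ⟨b, j, hjP⟩ x hx
      obtain ⟨hj0, hjL, hjv⟩ := (hP1mem j).mp hjP
      have hx01 : x ∈ Icc (0:ℝ) 1 := by
        cases b
        · exact hx01l x hx.1
        · exact hx01r x hx.1
      exact ⟨hx01, (hVid x hx01).mpr (hx.2.2.trans hjv)⟩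
    · rintro ⟨i, hiL⟩
      obtain ⟨x, h1, h2, h3⟩ := hVIVT i hiL
      exact ⟨x, ⟨⟨le_of_lt h1, le_of_lt h2⟩, h3⟩⟩
    · rintro ⟨b, j, hjP⟩
      obtain ⟨hj0, hjL, hjv⟩ := (hP1mem j).mp hjP
      cases b
      · refine ⟨u1 (t j), (hu1 (t j) (htmem j (by omega))).1, ?_⟩
        rw [(hu1 (t j) (htmem j (by omega))).2]
        exact hΦne j hj0 hjL
      · refine ⟨u2 (t j), (hu2 (t j) (htmem j (by omega))).1, ?_⟩
        rw [(hu2 (t j) (htmem j (by omega))).2]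
        exact hΦne j hj0 hjL
    · rintro ⟨i, hiL⟩ x hx y hy z hxz hzy
      refine ⟨⟨le_trans hx.1.1 hxz, le_trans hzy hy.1.2⟩, ?_⟩
      exact CM_level_conv (hmono i hiL) hx.1 hy.1 hx.2 hy.2 hxz hzy
    · rintro ⟨b, j, hjP⟩ x hx y hy z hxz hzy
      obtain ⟨hj0, hjL, hjv⟩ := (hP1mem j).mp hjP
      cases b
      · have hzm : z ∈ Icc (0:ℝ) v := ⟨le_trans hx.1.1 hxz, le_trans hzy hy.1.2⟩
        refine ⟨hzm, ?_⟩
        exact hΦconv j hj0 hjL (g x) hx.2 (g y) hy.2 (g z)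
          (hgmono hx.1 hzm hxz) (hgmono hzm hy.1 hzy)
      · have hzm : z ∈ Icc v (1:ℝ) := ⟨le_trans hx.1.1 hxz, le_trans hzy hy.1.2⟩
        refine ⟨hzm, ?_⟩
        exact hΦconv j hj0 hjL (g y) hy.2 (g x) hx.2 (g z)
          (hganti hzm hy.1 hzy) (hganti hx.1 hzm hxz)
    · -- A-separation
      have key : ∀ k k', k < L → k' < L → k < k' →
          ∀ b, b ∈ Icc (t k) (t (k+1)) ∧ ψ b = v →
          ∀ b', b' ∈ Icc (t k') (t (k'+1)) ∧ ψ b' = v →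
          ∃ ξ, ξ ∉ S1 ∧ b < ξ ∧ ξ < b' := by
        intro k k' hk hk' hkk b hb b' hb'
        refine ⟨t (k+1), ?_, ?_, ?_⟩
        · intro hmem
          exact htv (k+1) (by omega) hmem.2
        · rcases lt_or_eq_of_le hb.1.2 with h | h
          · exact h
          · exfalso
            apply htv (k+1) (by omega)
            rw [← h]
            exact hb.2
        · have h1 : t (k+1) ≤ t k' := htmono (k+1) k' (by omega) (by omega)
          have h2 : t k' < b' := by
            rcases lt_or_eq_of_le hb'.1.1 with h | h
            · exact h
            · exfalso
              apply htv k' (by omega)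
              rw [h]
              exact hb'.2
          linarith
      rintro ⟨i, hiL⟩ ⟨i', hi'L⟩ hne' a ha a' ha'
      rcases lt_trichotomy i i' with h | h | h
      · obtain ⟨ξ, h1, h2, h3⟩ := key i i' hiL hi'L h a ha a' ha'
        exact ⟨ξ, h1, Or.inl ⟨h2, h3⟩⟩
      · exfalso
        apply hne'
        subst h
        rfl
      · obtain ⟨ξ, h1, h2, h3⟩ := key i' i hi'L hiL h a' ha' a ha
        exact ⟨ξ, h1, Or.inr ⟨h2, h3⟩⟩
    · -- B-separation
      rintro ⟨b, j, hjP⟩ ⟨b', j', hj'P⟩ hne' x hx x' hx'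
      obtain ⟨hj0, hjL, hjv⟩ := (hP1mem j).mp hjP
      obtain ⟨hj'0, hj'L, hj'v⟩ := (hP1mem j').mp hj'P
      have hnotS1 : ∀ ξ₀, ξ₀ ∈ Icc (0:ℝ) 1 → ψ ξ₀ < 1 → u1 ξ₀ ∉ S1 := by
        intro ξ₀ hξ01 hξlt hmem
        have h := (hVid (u1 ξ₀) (hu1mem ξ₀ hξ01)).mp hmem.2
        rw [(hu1 ξ₀ hξ01).2] at h
        linarith
      have hnotS2 : ∀ ξ₀, ξ₀ ∈ Icc (0:ℝ) 1 → ψ ξ₀ < 1 → u2 ξ₀ ∉ S1 := by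
        intro ξ₀ hξ01 hξlt hmem
        have h := (hVid (u2 ξ₀) (hu2mem ξ₀ hξ01)).mp hmem.2
        rw [(hu2 ξ₀ hξ01).2] at h
        linarith
      cases b <;> cases b'
      · -- left, left
        have hjj : j ≠ j' := by
          intro h
          apply hne'
          subst h
          rfl
        have hgx01 : g x ∈ Icc (0:ℝ) 1 := hgm (hx01l x hx.1)
        have hgx'01 : g x' ∈ Icc (0:ℝ) 1 := hgm (hx01l x' hx'.1)
        rcases Nat.lt_or_ge j j' with hlt' | hge
        · obtain ⟨ξ₀, hξ01, hξpos, hξlt1, ho1, ho2⟩ :=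
            hΦsep j j' hj0 hjL hj'0 hj'L hlt' (Or.inr hjv) (Or.inr hj'v)
              (g x) hx.2 (g x') hx'.2
          refine ⟨u1 ξ₀, hnotS1 ξ₀ hξ01 hξlt1, Or.inl ⟨?_, ?_⟩⟩
          · rw [← hu1gx x hx.1]
            exact hu1lt (g x) hgx01 ξ₀ hξ01 ho1
          · rw [← hu1gx x' hx'.1]
            exact hu1lt ξ₀ hξ01 (g x') hgx'01 ho2
        · have hlt' : j' < j := by omega
          obtain ⟨ξ₀, hξ01, hξpos, hξlt1, ho1, ho2⟩ :=
            hΦsep j' j hj'0 hj'L hj0 hjL hlt' (Or.inr hj'v) (Or.inr hjv)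
              (g x') hx'.2 (g x) hx.2
          refine ⟨u1 ξ₀, hnotS1 ξ₀ hξ01 hξlt1, Or.inr ⟨?_, ?_⟩⟩
          · rw [← hu1gx x' hx'.1]
            exact hu1lt (g x') hgx'01 ξ₀ hξ01 ho1
          · rw [← hu1gx x hx.1]
            exact hu1lt ξ₀ hξ01 (g x) hgx01 ho2
      · -- left, right : separator v
        refine ⟨v, hvnotS1, Or.inl ⟨?_, ?_⟩⟩
        · rcases lt_or_eq_of_le hx.1.2 with h | h
          · exact h
          · exfalso
            have hgg : ψ (g x) = ψ (t j) := hx.2.2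
            rw [h, hgv] at hgg
            rw [hjv] at hgg
            exact (ne_of_lt hq1) hgg
        · rcases lt_or_eq_of_le hx'.1.1 with h | h
          · exact h
          · exfalso
            have hgg : ψ (g x') = ψ (t j') := hx'.2.2
            rw [← h, hgv] at hgg
            rw [hj'v] at hgg
            exact (ne_of_lt hq1) hgg
      · -- right, left : separator v
        refine ⟨v, hvnotS1, Or.inr ⟨?_, ?_⟩⟩
        · rcases lt_or_eq_of_le hx'.1.2 with h | h
          · exact h
          · exfalso
            have hgg : ψ (g x') = ψ (t j') := hx'.2.2
            rw [h, hgv] at hgg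
            rw [hj'v] at hgg
            exact (ne_of_lt hq1) hgg
        · rcases lt_or_eq_of_le hx.1.1 with h | h
          · exact h
          · exfalso
            have hgg : ψ (g x) = ψ (t j) := hx.2.2
            rw [← h, hgv] at hgg
            rw [hjv] at hgg
            exact (ne_of_lt hq1) hgg
      · -- right, right
        have hjj : j ≠ j' := by
          intro h
          apply hne'
          subst h
          rfl
        have hgx01 : g x ∈ Icc (0:ℝ) 1 := hgm (hx01r x hx.1)
        have hgx'01 : g x' ∈ Icc (0:ℝ) 1 := hgm (hx01r x' hx'.1)
        rcases Nat.lt_or_ge j j' with hlt' | hge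
        · obtain ⟨ξ₀, hξ01, hξpos, hξlt1, ho1, ho2⟩ :=
            hΦsep j j' hj0 hjL hj'0 hj'L hlt' (Or.inr hjv) (Or.inr hj'v)
              (g x) hx.2 (g x') hx'.2
          refine ⟨u2 ξ₀, hnotS2 ξ₀ hξ01 hξlt1, Or.inr ⟨?_, ?_⟩⟩
          · rw [← hu2gx x' hx'.1]
            exact hu2lt ξ₀ hξ01 (g x') hgx'01 ho2
          · rw [← hu2gx x hx.1]
            exact hu2lt (g x) hgx01 ξ₀ hξ01 ho1
        · have hlt' : j' < j := by omega
          obtain ⟨ξ₀, hξ01, hξpos, hξlt1, ho1, ho2⟩ :=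
            hΦsep j' j hj'0 hj'L hj0 hjL hlt' (Or.inr hj'v) (Or.inr hjv)
              (g x') hx'.2 (g x) hx.2
          refine ⟨u2 ξ₀, hnotS2 ξ₀ hξ01 hξlt1, Or.inl ⟨?_, ?_⟩⟩
          · rw [← hu2gx x hx.1]
            exact hu2lt ξ₀ hξ01 (g x) hgx01 ho2
          · rw [← hu2gx x' hx'.1]
            exact hu2lt (g x') hgx'01 ξ₀ hξ01 ho1
  have hL2c1 : L = 2 * P1.card := by
    have h := happ1
    rwa [Fintype.card_fin, Fintype.card_prod, Fintype.card_bool, Fintype.card_coe] at h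
  -- SECOND zone application : levels 0 and 1
  set S2 : Set ℝ := {x | x ∈ Icc (0:ℝ) 1 ∧ (ψ x = 0 ∨ ψ x = 1)} with hS2def
  have hvnotS2 : v ∉ S2 := by
    intro hvS
    have h := (hFid v hv01).mp hvS.2
    rw [hgv] at h
    exact (ne_of_gt hq0) h
  have hPU : ∀ j : ℕ, j ∈ P0 ∪ P1 ↔ 0 < j ∧ j < L ∧ (ψ (t j) = 0 ∨ ψ (t j) = 1) := by
    intro j
    constructor
    · intro h
      rcases Finset.mem_union.mp h with h | h
      · obtain ⟨a, b, c⟩ := (hP0mem j).mp h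
        exact ⟨a, b, Or.inl c⟩
      · obtain ⟨a, b, c⟩ := (hP1mem j).mp h
        exact ⟨a, b, Or.inr c⟩
    · rintro ⟨a, b, c | c⟩
      · exact Finset.mem_union_left _ ((hP0mem j).mpr ⟨a, b, c⟩)
      · exact Finset.mem_union_right _ ((hP1mem j).mpr ⟨a, b, c⟩)
  have happ2 : Fintype.card {j // j ∈ P0 ∪ P1} = Fintype.card (Bool × {j // j ∈ P0}) := by
    apply CM_zone S2
      (fun j : {j // j ∈ P0 ∪ P1} => Φ j.val)
      (fun bj : Bool × {j // j ∈ P0} =>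
        {x | x ∈ cond bj.1 (Icc v 1) (Icc 0 v) ∧ g x ∈ Φ bj.2.val})
    · intro x hx
      rcases hx.2 with h | h
      · obtain ⟨j, hj0, hjL, hjv, hjmem⟩ :=
          hΦcover 0 (Or.inl rfl) (ne_of_gt hp0) (ne_of_gt hq0) x hx.1 h
        exact ⟨⟨j, (hPU j).mpr ⟨hj0, hjL, Or.inl hjv⟩⟩, hjmem⟩
      · obtain ⟨j, hj0, hjL, hjv, hjmem⟩ :=
          hΦcover 1 (Or.inr rfl) (ne_of_lt hp1) (ne_of_lt hq1) x hx.1 h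
        exact ⟨⟨j, (hPU j).mpr ⟨hj0, hjL, Or.inr hjv⟩⟩, hjmem⟩
    · rintro ⟨j, hjP⟩ x hx
      obtain ⟨hj0, hjL, hjv⟩ := (hPU j).mp hjP
      refine ⟨hΦ01 j hj0 hjL hx, ?_⟩
      rcases hjv with h | h
      · exact Or.inl (hx.2.trans h)
      · exact Or.inr (hx.2.trans h)
    · intro x hx
      have hgx0 : ψ (g x) = 0 := (hFid x hx.1).mp hx.2
      have hgx01 : g x ∈ Icc (0:ℝ) 1 := hgm hx.1
      obtain ⟨j, hj0, hjL, hjv, hjmem⟩ :=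
        hΦcover 0 (Or.inl rfl) (ne_of_gt hp0) (ne_of_gt hq0) (g x) hgx01 hgx0
      have hjP : j ∈ P0 := (hP0mem j).mpr ⟨hj0, hjL, hjv⟩
      rcases le_total x v with hxv | hvx
      · exact ⟨⟨false, ⟨j, hjP⟩⟩, ⟨⟨hx.1.1, hxv⟩, hjmem⟩⟩
      · exact ⟨⟨true, ⟨j, hjP⟩⟩, ⟨⟨hvx, hx.1.2⟩, hjmem⟩⟩
    · rintro ⟨b, j, hjP⟩ x hx
      obtain ⟨hj0, hjL, hjv⟩ := (hP0mem j).mp hjP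
      have hx01 : x ∈ Icc (0:ℝ) 1 := by
        cases b
        · exact hx01l x hx.1
        · exact hx01r x hx.1
      exact ⟨hx01, (hFid x hx01).mpr (hx.2.2.trans hjv)⟩
    · rintro ⟨j, hjP⟩
      obtain ⟨hj0, hjL, _⟩ := (hPU j).mp hjP
      exact ⟨t j, hΦne j hj0 hjL⟩
    · rintro ⟨b, j, hjP⟩
      obtain ⟨hj0, hjL, hjv⟩ := (hP0mem j).mp hjP
      cases b
      · refine ⟨u1 (t j), (hu1 (t j) (htmem j (by omega))).1, ?_⟩
        rw [(hu1 (t j) (htmem j (by omega))).2]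
        exact hΦne j hj0 hjL
      · refine ⟨u2 (t j), (hu2 (t j) (htmem j (by omega))).1, ?_⟩
        rw [(hu2 (t j) (htmem j (by omega))).2]
        exact hΦne j hj0 hjL
    · rintro ⟨j, hjP⟩ x hx y hy z hxz hzy
      obtain ⟨hj0, hjL, _⟩ := (hPU j).mp hjP
      exact hΦconv j hj0 hjL x hx y hy z hxz hzy
    · rintro ⟨b, j, hjP⟩ x hx y hy z hxz hzy
      obtain ⟨hj0, hjL, hjv⟩ := (hP0mem j).mp hjP
      cases b
      · have hzm : z ∈ Icc (0:ℝ) v := ⟨le_trans hx.1.1 hxz, le_trans hzy hy.1.2⟩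
        refine ⟨hzm, ?_⟩
        exact hΦconv j hj0 hjL (g x) hx.2 (g y) hy.2 (g z)
          (hgmono hx.1 hzm hxz) (hgmono hzm hy.1 hzy)
      · have hzm : z ∈ Icc v (1:ℝ) := ⟨le_trans hx.1.1 hxz, le_trans hzy hy.1.2⟩
        refine ⟨hzm, ?_⟩
        exact hΦconv j hj0 hjL (g y) hy.2 (g x) hx.2 (g z)
          (hganti hzm hy.1 hzy) (hganti hx.1 hzm hxz)
    · -- A-separation for S2
      rintro ⟨j, hjP⟩ ⟨j', hj'P⟩ hne' a ha a' ha'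
      obtain ⟨hj0, hjL, hjv⟩ := (hPU j).mp hjP
      obtain ⟨hj'0, hj'L, hj'v⟩ := (hPU j').mp hj'P
      have hjj : j ≠ j' := by
        intro h
        apply hne'
        subst h
        rfl
      rcases Nat.lt_or_ge j j' with hlt' | hge
      · obtain ⟨ξ, hξ01, hξpos, hξlt1, ho1, ho2⟩ :=
          hΦsep j j' hj0 hjL hj'0 hj'L hlt' hjv hj'v a ha a' ha'
        refine ⟨ξ, ?_, Or.inl ⟨ho1, ho2⟩⟩
        intro hmem
        rcases hmem.2 with h | h <;> linarith
      · have hlt' : j' < j := by omega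
        obtain ⟨ξ, hξ01, hξpos, hξlt1, ho1, ho2⟩ :=
          hΦsep j' j hj'0 hj'L hj0 hjL hlt' hj'v hjv a' ha' a ha
        refine ⟨ξ, ?_, Or.inr ⟨ho1, ho2⟩⟩
        intro hmem
        rcases hmem.2 with h | h <;> linarith
    · -- B-separation for S2
      rintro ⟨b, j, hjP⟩ ⟨b', j', hj'P⟩ hne' x hx x' hx'
      obtain ⟨hj0, hjL, hjv⟩ := (hP0mem j).mp hjP
      obtain ⟨hj'0, hj'L, hj'v⟩ := (hP0mem j').mp hj'P
      have hnotS1 : ∀ ξ₀, ξ₀ ∈ Icc (0:ℝ) 1 → 0 < ψ ξ₀ → ψ ξ₀ < 1 → u1 ξ₀ ∉ S2 := by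
        intro ξ₀ hξ01 hξp hξlt hmem
        have h := (hFid (u1 ξ₀) (hu1mem ξ₀ hξ01)).mp hmem.2
        rw [(hu1 ξ₀ hξ01).2] at h
        linarith
      have hnotS2' : ∀ ξ₀, ξ₀ ∈ Icc (0:ℝ) 1 → 0 < ψ ξ₀ → ψ ξ₀ < 1 → u2 ξ₀ ∉ S2 := by
        intro ξ₀ hξ01 hξp hξlt hmem
        have h := (hFid (u2 ξ₀) (hu2mem ξ₀ hξ01)).mp hmem.2
        rw [(hu2 ξ₀ hξ01).2] at h
        linarith
      cases b <;> cases b'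
      · have hjj : j ≠ j' := by
          intro h
          apply hne'
          subst h
          rfl
        have hgx01 : g x ∈ Icc (0:ℝ) 1 := hgm (hx01l x hx.1)
        have hgx'01 : g x' ∈ Icc (0:ℝ) 1 := hgm (hx01l x' hx'.1)
        rcases Nat.lt_or_ge j j' with hlt' | hge
        · obtain ⟨ξ₀, hξ01, hξpos, hξlt1, ho1, ho2⟩ :=
            hΦsep j j' hj0 hjL hj'0 hj'L hlt' (Or.inl hjv) (Or.inl hj'v)
              (g x) hx.2 (g x') hx'.2
          refine ⟨u1 ξ₀, hnotS1 ξ₀ hξ01 hξpos hξlt1, Or.inl ⟨?_, ?_⟩⟩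
          · rw [← hu1gx x hx.1]
            exact hu1lt (g x) hgx01 ξ₀ hξ01 ho1
          · rw [← hu1gx x' hx'.1]
            exact hu1lt ξ₀ hξ01 (g x') hgx'01 ho2
        · have hlt' : j' < j := by omega
          obtain ⟨ξ₀, hξ01, hξpos, hξlt1, ho1, ho2⟩ :=
            hΦsep j' j hj'0 hj'L hj0 hjL hlt' (Or.inl hj'v) (Or.inl hjv)
              (g x') hx'.2 (g x) hx.2
          refine ⟨u1 ξ₀, hnotS1 ξ₀ hξ01 hξpos hξlt1, Or.inr ⟨?_, ?_⟩⟩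
          · rw [← hu1gx x' hx'.1]
            exact hu1lt (g x') hgx'01 ξ₀ hξ01 ho1
          · rw [← hu1gx x hx.1]
            exact hu1lt ξ₀ hξ01 (g x) hgx01 ho2
      · refine ⟨v, hvnotS2, Or.inl ⟨?_, ?_⟩⟩
        · rcases lt_or_eq_of_le hx.1.2 with h | h
          · exact h
          · exfalso
            have hgg : ψ (g x) = ψ (t j) := hx.2.2
            rw [h, hgv] at hgg
            rw [hjv] at hgg
            exact (ne_of_gt hq0) hgg
        · rcases lt_or_eq_of_le hx'.1.1 with h | h
          · exact h
          · exfalso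
            have hgg : ψ (g x') = ψ (t j') := hx'.2.2
            rw [← h, hgv] at hgg
            rw [hj'v] at hgg
            exact (ne_of_gt hq0) hgg
      · refine ⟨v, hvnotS2, Or.inr ⟨?_, ?_⟩⟩
        · rcases lt_or_eq_of_le hx'.1.2 with h | h
          · exact h
          · exfalso
            have hgg : ψ (g x') = ψ (t j') := hx'.2.2
            rw [h, hgv] at hgg
            rw [hj'v] at hgg
            exact (ne_of_gt hq0) hgg
        · rcases lt_or_eq_of_le hx.1.1 with h | h
          · exact h
          · exfalso
            have hgg : ψ (g x) = ψ (t j) := hx.2.2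
            rw [← h, hgv] at hgg
            rw [hjv] at hgg
            exact (ne_of_gt hq0) hgg
      · have hjj : j ≠ j' := by
          intro h
          apply hne'
          subst h
          rfl
        have hgx01 : g x ∈ Icc (0:ℝ) 1 := hgm (hx01r x hx.1)
        have hgx'01 : g x' ∈ Icc (0:ℝ) 1 := hgm (hx01r x' hx'.1)
        rcases Nat.lt_or_ge j j' with hlt' | hge
        · obtain ⟨ξ₀, hξ01, hξpos, hξlt1, ho1, ho2⟩ :=
            hΦsep j j' hj0 hjL hj'0 hj'L hlt' (Or.inl hjv) (Or.inl hj'v)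
              (g x) hx.2 (g x') hx'.2
          refine ⟨u2 ξ₀, hnotS2' ξ₀ hξ01 hξpos hξlt1, Or.inr ⟨?_, ?_⟩⟩
          · rw [← hu2gx x' hx'.1]
            exact hu2lt ξ₀ hξ01 (g x') hgx'01 ho2
          · rw [← hu2gx x hx.1]
            exact hu2lt (g x) hgx01 ξ₀ hξ01 ho1
        · have hlt' : j' < j := by omega
          obtain ⟨ξ₀, hξ01, hξpos, hξlt1, ho1, ho2⟩ :=
            hΦsep j' j hj'0 hj'L hj0 hjL hlt' (Or.inl hj'v) (Or.inl hjv)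
              (g x') hx'.2 (g x) hx.2
          refine ⟨u2 ξ₀, hnotS2' ξ₀ hξ01 hξpos hξlt1, Or.inl ⟨?_, ?_⟩⟩
          · rw [← hu2gx x hx.1]
            exact hu2lt ξ₀ hξ01 (g x) hgx01 ho2
          · rw [← hu2gx x' hx'.1]
            exact hu2lt (g x') hgx'01 ξ₀ hξ01 ho1
  have hc0c1 : (P0 ∪ P1).card = 2 * P0.card := by
    have h := happ2
    rwa [Fintype.card_coe, Fintype.card_prod, Fintype.card_bool, Fintype.card_coe] at h
  have hdisj : Disjoint P0 P1 := by
    rw [Finset.disjoint_left]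
    intro j hj0 hj1
    have h0 := ((hP0mem j).mp hj0).2.2
    have h1 := ((hP1mem j).mp hj1).2.2
    rw [h0] at h1
    norm_num at h1
  have hunion : (P0 ∪ P1).card = P0.card + P1.card := Finset.card_union_of_disjoint hdisj
  have hsubIoo : P0 ∪ P1 ⊆ Finset.Ioo 0 L := by
    intro j hj
    obtain ⟨a, b, _⟩ := (hPU j).mp hj
    exact Finset.mem_Ioo.mpr ⟨a, b⟩
  have hle := Finset.card_le_card hsubIoo
  rw [Nat.card_Ioo] at hle
  omega

end CMfinal


/-- a non-constant continuous piecewise linear commutator `ψ` of a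
unimodal map satisfies `ψ 1 ∈ {0, 1}`. -/
theorem commutator_one_mem_pair
    (g ψ : ℝ → ℝ) (hg : IsUnimodal g)
    (hψc : ContinuousOn ψ (Icc 0 1)) (hψm : MapsTo ψ (Icc 0 1) (Icc 0 1))
    (hψPL : IsPiecewiseLinear ψ)
    (hnonconst : ¬ ∃ c : ℝ, ∀ x ∈ Icc (0:ℝ) 1, ψ x = c)
    (hcomm : ∀ x ∈ Icc (0:ℝ) 1, ψ (g x) = g (ψ x)) :
    ψ 1 = 0 ∨ ψ 1 = 1 := by
  by_contra hcon
  push_neg at hcon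
  obtain ⟨hq0', hq1'⟩ := hcon
  obtain ⟨v, hgc, hgm, hv, hginc, hgdec, hg0, hg1, hgv⟩ := hg
  have h01 : (0:ℝ) ∈ Icc (0:ℝ) 1 := ⟨le_refl 0, zero_le_one⟩
  have h11 : (1:ℝ) ∈ Icc (0:ℝ) 1 := ⟨zero_le_one, le_refl 1⟩
  have hq01 : ψ 1 ∈ Icc (0:ℝ) 1 := hψm h11
  have hq0 : 0 < ψ 1 := lt_of_le_of_ne hq01.1 (Ne.symm hq0')
  have hq1 : ψ 1 < 1 := lt_of_le_of_ne hq01.2 hq1'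
  have hp01 : ψ 0 ∈ Icc (0:ℝ) 1 := hψm h01
  have hgq : g (ψ 1) = ψ 0 := by
    have h := hcomm 1 h11
    rw [hg1] at h
    exact h.symm
  have hp0 : 0 < ψ 0 := by
    rw [← hgq]
    rcases le_total (ψ 1) v with h | h
    · have hh := hginc ⟨le_refl 0, hv.1.le⟩ ⟨hq01.1, h⟩ hq0
      rwa [hg0] at hh
    · have hh := hgdec ⟨h, hq01.2⟩ ⟨hv.2.le, le_refl 1⟩ hq1
      rwa [hg1] at hh
  have hp1 : ψ 0 < 1 := by
    rcases lt_or_eq_of_le hp01.2 with h | h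
    · exact h
    · exfalso
      have hpfix : g (ψ 0) = ψ 0 := by
        have hh := hcomm 0 h01
        rw [hg0] at hh
        exact hh.symm
      rw [h, hg1] at hpfix
      norm_num at hpfix
  have hbl : ∀ y ∈ Icc (0:ℝ) 1, ∃ x, x ∈ Icc 0 v ∧ g x = y := by
    intro y hy
    have hcont : ContinuousOn g (Icc 0 v) := hgc.mono (Icc_subset_Icc (le_refl _) hv.2.le)
    have hiv := intermediate_value_Icc hv.1.le hcont
    rw [hg0, hgv] at hiv
    obtain ⟨x, hx, hgx⟩ := hiv hy
    exact ⟨x, hx, hgx⟩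
  have hbr : ∀ y ∈ Icc (0:ℝ) 1, ∃ x, x ∈ Icc v 1 ∧ g x = y := by
    intro y hy
    have hcont : ContinuousOn g (Icc v 1) := hgc.mono (Icc_subset_Icc hv.1.le (le_refl _))
    have hiv := intermediate_value_Icc' hv.2.le hcont
    rw [hg1, hgv] at hiv
    obtain ⟨x, hx, hgx⟩ := hiv hy
    exact ⟨x, hx, hgx⟩
  classical
  set u1 : ℝ → ℝ := fun y => if h : ∃ x, x ∈ Icc (0:ℝ) v ∧ g x = y then h.choose else 0
    with hu1def
  set u2 : ℝ → ℝ := fun y => if h : ∃ x, x ∈ Icc v (1:ℝ) ∧ g x = y then h.choose else 0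
    with hu2def
  have hu1 : ∀ y ∈ Icc (0:ℝ) 1, u1 y ∈ Icc 0 v ∧ g (u1 y) = y := by
    intro y hy
    have h := hbl y hy
    simp only [hu1def, dif_pos h]
    exact h.choose_spec
  have hu2 : ∀ y ∈ Icc (0:ℝ) 1, u2 y ∈ Icc v 1 ∧ g (u2 y) = y := by
    intro y hy
    have h := hbr y hy
    simp only [hu2def, dif_pos h]
    exact h.choose_spec
  obtain ⟨L, t, hL0, hd, hne, halt⟩ := CM_reduced ψ hψPL hnonconst
  have hcross := CM_cross hgm hv hginc hgdec hg0 hg1 hgv hψc hψm hcomm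
    u1 u2 hu1 hu2 hL0 hd hne halt
  exact CM_final hgm hv hginc hgdec hg0 hg1 hgv hψc hψm hcomm
    u1 u2 hu1 hu2 hL0 hd hne hcross hp0 hp1 hq0 hq1
end

section
/- Let g be a piecewise linear unimodal map whose complete preimage g^{−∞}(0) of 0 is dense in [0,1], let a ∈ (0,1) be the first (smallest) positive kink of g, and let ψ be a piecewise linear self semi conjugation of g with ψ(0) = 0 and ψ′(0) > g′(0). Then a·g′(0)/ψ′(0) is the first (smallest) positive kink of ψ; in particular ψ is linear on [0, a·g′(0)/ψ′(0)] and not linear on any larger interval [0, c] with c > a·g′(0)/ψ′(0). -/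
open Set

/-- if `a` is the first positive kink of `g` and `ψ` is a piecewise linear
self semi conjugation of `g` with `ψ 0 = 0` and `ψ′(0) > g′(0)`, then
`a·g′(0)/ψ′(0)` is the first positive kink of `ψ`. -/
theorem first_kink_of_commutator
    (g ψ : ℝ → ℝ) (a sg sψ : ℝ)
    (hg : IsUnimodal g) (hgPL : IsPiecewiseLinear g)
    (hdense : Icc (0:ℝ) 1 ⊆ closure (preimZero g))
    (ha : a ∈ Ioo (0:ℝ) 1) (hak : FirstKink g a)
    (hsg : ∀ x ∈ Icc (0:ℝ) a, g x = sg * x)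
    (hψc : ContinuousOn ψ (Icc 0 1)) (hψm : MapsTo ψ (Icc 0 1) (Icc 0 1))
    (hψs : SurjOn ψ (Icc 0 1) (Icc 0 1))
    (hcomm : ∀ x ∈ Icc (0:ℝ) 1, ψ (g x) = g (ψ x))
    (hψPL : IsPiecewiseLinear ψ) (hψ0 : ψ 0 = 0)
    (hsψ : ∃ q : ℝ, 0 < q ∧ ∀ x ∈ Icc (0:ℝ) q, ψ x = sψ * x)
    (hgt : sg < sψ) :
    FirstKink ψ (a * sg / sψ) := by
  obtain ⟨v, hgc, hgm, hv, hmono, hanti, hg0, hg1, hgv⟩ := hg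
  obtain ⟨q, hq, hψq⟩ := hsψ
  -- sg > 0
  have hminpos : 0 < min a v := lt_min ha.1 hv.1
  have hsg0 : 0 < sg := by
    have h1 : g (min a v) = sg * min a v :=
      hsg _ ⟨hminpos.le, min_le_left _ _⟩
    have h2 : g 0 < g (min a v) := by
      apply hmono ⟨le_refl 0, hv.1.le⟩ ⟨hminpos.le, min_le_right _ _⟩ hminpos
    rw [hg0, h1] at h2
    rcases mul_pos_iff.mp h2 with ⟨h,_⟩ | ⟨_,h⟩
    · exact h
    · linarith
  -- sg > 1
  have hsg1 : 1 < sg := by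
    by_contra hle
    push_neg at hle
    have hmem : a / 2 ∈ Icc (0:ℝ) 1 := ⟨by linarith [ha.1], by linarith [ha.2]⟩
    have hcl := hdense hmem
    rw [Metric.mem_closure_iff] at hcl
    obtain ⟨p, ⟨hp01, n, hn1, hpn⟩, hdist⟩ := hcl (a/2) (by linarith [ha.1])
    rw [Real.dist_eq, abs_lt] at hdist
    have hp0 : 0 < p := by linarith [hdist.1, hdist.2]
    have hpa : p < a := by linarith [hdist.1, hdist.2]
    have hiter : ∀ k : ℕ, g^[k] p = sg ^ k * p := by
      intro k
      induction k with
      | zero => simp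
      | succ k ih =>
        have hpow0 : 0 < sg ^ k := pow_pos hsg0 k
        have hpow1 : sg ^ k ≤ 1 := pow_le_one₀ hsg0.le hle
        have hmem : sg ^ k * p ∈ Icc (0:ℝ) a := by
          constructor
          · positivity
          · nlinarith
        rw [Function.iterate_succ_apply', ih, hsg _ hmem, pow_succ]
        ring
    have := hiter n
    rw [hpn] at this
    have : (0:ℝ) < sg ^ n * p := by positivity
    nlinarith [hiter n]
  have hsψ1 : 1 < sψ := hsg1.trans hgt
  have hsψ0 : 0 < sψ := by linarith
  set T := a * sg / sψ with hT
  have hTpos : 0 < T := by rw [hT]; exact div_pos (mul_pos ha.1 hsg0) hsψ0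
  -- ψ is linear with slope sψ on [0, T]
  have key : ∀ n : ℕ, ∀ x : ℝ, 0 ≤ x → x ≤ T → x ≤ q * sg ^ n → ψ x = sψ * x := by
    intro n
    induction n with
    | zero =>
      intro x hx0 _ hxq
      exact hψq x ⟨hx0, by simpa using hxq⟩
    | succ n ih =>
      intro x hx0 hxT hxq
      by_cases hcase : x ≤ q * sg ^ n
      · exact ih x hx0 hxT hcase
      push_neg at hcase
      set u := x / sg with hu
      have hu0 : 0 ≤ u := div_nonneg hx0 hsg0.le
      have huq : u ≤ q * sg ^ n := by
        rw [hu, div_le_iff₀ hsg0]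
        calc x ≤ q * sg ^ (n+1) := hxq
          _ = q * sg ^ n * sg := by ring
      have huT : u ≤ T := by
        have : u ≤ x := by
          rw [hu]
          exact div_le_self hx0 hsg1.le
        linarith
      have huψ : u ≤ a / sψ := by
        rw [hu, div_le_div_iff₀ hsg0 hsψ0]
        rw [hT] at hxT
        calc x * sψ ≤ (a * sg / sψ) * sψ := by nlinarith
          _ = a * sg := by field_simp
      have hua : u ≤ a := by
        have : a / sψ ≤ a := by
          rw [div_le_iff₀ hsψ0]; nlinarith [ha.1]
        linarith
      have hu1 : u ≤ 1 := by linarith [ha.2]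
      have hgu : g u = sg * u := hsg u ⟨hu0, hua⟩
      have hsgu : sg * u = x := by rw [hu]; field_simp
      have hψu : ψ u = sψ * u := ih u hu0 huT huq
      have hc := hcomm u ⟨hu0, hu1⟩
      rw [hgu, hsgu, hψu] at hc
      have hsψua : sψ * u ≤ a := by
        rw [← le_div_iff₀' hsψ0]; exact huψ
      have : g (sψ * u) = sg * (sψ * u) := hsg _ ⟨by positivity, hsψua⟩
      rw [this] at hc
      rw [hc, ← hsgu]; ring
  have main : ∀ x ∈ Icc (0:ℝ) T, ψ x = sψ * x := by
    intro x hx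
    obtain ⟨n, hn⟩ := pow_unbounded_of_one_lt (T / q) hsg1
    have : T ≤ q * sg ^ n := by
      rw [div_lt_iff₀ hq] at hn
      nlinarith
    exact key n x hx.1 hx.2 (le_trans hx.2 this)
  refine ⟨hTpos, ⟨sψ, 0, fun x hx => by rw [main x hx]; ring⟩, ?_⟩
  -- no larger interval of linearity
  intro c hc ⟨c', d, hlin⟩
  have hc0 : 0 < c := hTpos.trans hc
  have hd : d = 0 := by
    have := hlin 0 ⟨le_refl 0, hc0.le⟩
    rw [hψ0] at this; linarith
  have hw : 0 < min q c := lt_min hq hc0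
  have hcs : c' = sψ := by
    have h1 := hlin (min q c) ⟨hw.le, min_le_right _ _⟩
    have h2 := hψq (min q c) ⟨hw.le, min_le_left _ _⟩
    rw [h2, hd] at h1
    have : sψ * min q c = c' * min q c := by linarith
    exact (mul_right_cancel₀ hw.ne' this.symm)
  have hψlin : ∀ y ∈ Icc (0:ℝ) c, ψ y = sψ * y := by
    intro y hy
    rw [hlin y hy, hcs, hd]; ring
  -- derive that g is linear beyond a, contradiction
  set x0 := min a (min c (c / sg)) with hx0def
  have hx0pos : 0 < x0 := lt_min ha.1 (lt_min hc0 (by positivity))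
  have hglin : ∀ y ∈ Icc (0:ℝ) (sψ * x0), g y = sg * y := by
    intro y hy
    set x := y / sψ with hx
    have hx0' : 0 ≤ x := div_nonneg hy.1 hsψ0.le
    have hxx0 : x ≤ x0 := by
      rw [hx, div_le_iff₀ hsψ0]
      calc y ≤ sψ * x0 := hy.2
        _ = x0 * sψ := by ring
    have hxa : x ≤ a := hxx0.trans (min_le_left _ _)
    have hxc : x ≤ c := hxx0.trans ((min_le_right _ _).trans (min_le_left _ _))
    have hxcs : x ≤ c / sg := hxx0.trans ((min_le_right _ _).trans (min_le_right _ _))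
    have hx1 : x ≤ 1 := by linarith [ha.2]
    have hgx : g x = sg * x := hsg x ⟨hx0', hxa⟩
    have hc1 := hcomm x ⟨hx0', hx1⟩
    rw [hgx] at hc1
    have hsgxc : sg * x ≤ c := by
      rw [← le_div_iff₀' hsg0]; exact hxcs
    rw [hψlin (sg * x) ⟨by positivity, hsgxc⟩, hψlin x ⟨hx0', hxc⟩] at hc1
    have hyx : sψ * x = y := by rw [hx]; field_simp
    rw [hyx] at hc1
    rw [← hc1, ← hyx]; ring
  have hbig : a < sψ * x0 := by
    rw [hx0def]
    have h1 : a / sψ < a := by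
      rw [div_lt_iff₀ hsψ0]; nlinarith [ha.1]
    have h2 : a / sψ < c := by
      have : T = a * sg / sψ := hT
      have hTa : a / sψ < T := by
        rw [hT, div_lt_div_iff₀ hsψ0 hsψ0]
        nlinarith [mul_pos (mul_pos ha.1 hsψ0) (by linarith : (0:ℝ) < sg - 1)]
      linarith
    have h3 : a / sψ < c / sg := by
      rw [div_lt_div_iff₀ hsψ0 hsg0]
      rw [hT] at hc
      calc a * sg = (a * sg / sψ) * sψ := by field_simp
        _ < c * sψ := by nlinarith
    have : a / sψ < min a (min c (c / sg)) := lt_min h1 (lt_min h2 h3)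
    calc a = (a / sψ) * sψ := by field_simp
      _ < min a (min c (c / sg)) * sψ := by nlinarith
      _ = sψ * min a (min c (c / sg)) := by ring
  exact hak.2.2 (sψ * x0) hbig ⟨sg, 0, fun y hy => by rw [hglin y hy]; ring⟩
end

section
/- Let t ≥ 1 and let ξ_t be the map ξ_t(x) = (1 − (−1)^{⌊tx⌋})/2 + (−1)^{⌊tx⌋}·{tx}. Then for every n ≥ 1 and every k with 0 ≤ k ≤ ⌊2^{n−1}/t⌋, ξ_t(μ_{n,k}(f)) = μ_{n,kt}(f), i.e., ξ_t(k/2^{n−1}) = kt/2^{n−1}. -/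
open Set

/-- `ξ_t (k/2^(n-1)) = k·t/2^(n-1)` for all `k ≤ ⌊2^(n-1)/t⌋`. -/
theorem xi_on_dyadic (t n k : ℕ) (ht : 1 ≤ t) (hn : 1 ≤ n)
    (hk : k ≤ 2^(n-1) / t) :
    xi t ((k : ℝ) / 2^(n-1)) = ((k * t : ℕ) : ℝ) / 2^(n-1) := by
  have htk : k * t ≤ 2^(n-1) := (Nat.le_div_iff_mul_le ht).mp hk
  have hpow : (0:ℝ) < 2^(n-1) := by positivity
  have hy : (t:ℝ) * ((k:ℝ) / 2^(n-1)) = ((k*t : ℕ) : ℝ) / 2^(n-1) := by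
    push_cast; ring
  rcases lt_or_eq_of_le htk with h | h
  · have hy1 : ((k*t : ℕ) : ℝ) / 2^(n-1) < 1 := by
      rw [div_lt_one hpow]; exact_mod_cast h
    have hy0 : (0:ℝ) ≤ ((k*t : ℕ) : ℝ) / 2^(n-1) := by positivity
    have hfl : ⌊(t:ℝ) * ((k:ℝ) / 2^(n-1))⌋ = 0 := by
      rw [hy]; exact Int.floor_eq_zero_iff.mpr ⟨hy0, hy1⟩
    rw [xi, hfl, Int.fract, hfl, hy]
    norm_num
  · have hy1 : ((k*t : ℕ) : ℝ) / 2^(n-1) = 1 := by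
      rw [div_eq_one_iff_eq (ne_of_gt hpow)]; exact_mod_cast h
    rw [xi, hy, hy1]
    norm_num [Int.fract]
end

section
/- Let g be a unimodal map topologically conjugate to the tent map f via a homeomorphism h with h ∘ f = g ∘ h, and for t ∈ ℕ let ψ_t = h ∘ ξ_t ∘ h^{−1}. Then for every t ≥ 1, every n ≥ 1 and every k with 0 ≤ k ≤ ⌊2^{n−1}/t⌋, the equality ψ_t(μ_{n,k}(g)) = μ_{n,kt}(g) holds. -/
open Set

lemma tent_mapsTo : MapsTo tent (Icc 0 1) (Icc (0:ℝ) 1) := by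
  intro x ⟨h0, h1⟩
  unfold tent
  constructor
  · have : |1 - 2*x| ≤ 1 := by rw [abs_le]; constructor <;> linarith
    linarith
  · have : (0:ℝ) ≤ |1 - 2*x| := abs_nonneg _
    linarith

lemma tent_iter_zero' : ∀ n : ℕ, ∀ k : ℕ, k ≤ 2^n → tent^[n+1] ((k:ℝ)/2^n) = 0 := by
  intro n
  induction n with
  | zero =>
    intro k hk
    interval_cases k <;> simp [tent] <;> norm_num [abs_of_nonpos]
  | succ n ih =>
    intro k hk
    rw [Function.iterate_succ_apply]
    by_cases hks : k ≤ 2^n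
    · have h1 : tent ((k:ℝ)/2^(n+1)) = (k:ℝ)/2^n := by
        unfold tent
        have hk' : (k:ℝ) ≤ 2^n := by exact_mod_cast hks
        have e : 2*((k:ℝ)/2^(n+1)) = (k:ℝ)/2^n := by field_simp; ring
        rw [abs_of_nonneg (by rw [sub_nonneg, e, div_le_one (by positivity : (0:ℝ) < 2^n)]; exact hk')]
        rw [e]; ring
      rw [h1]; exact ih k hks
    · push_neg at hks
      have h1 : tent ((k:ℝ)/2^(n+1)) = ((2^(n+1) - k : ℕ):ℝ)/2^n := by
        unfold tent
        have hk' : (2:ℝ)^n < (k:ℝ) := by exact_mod_cast hks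
        have e : 2*((k:ℝ)/2^(n+1)) = (k:ℝ)/2^n := by field_simp; ring
        rw [abs_of_nonpos (by rw [sub_nonpos, e, one_le_div (by positivity : (0:ℝ) < 2^n)]; exact hk'.le)]
        rw [Nat.cast_sub hk]
        push_cast
        field_simp
        ring
      rw [h1]
      exact ih _ (by omega)

lemma conj_iter (g h : ℝ → ℝ)
    (hconj : ∀ x ∈ Icc (0:ℝ) 1, h (tent x) = g (h x)) :
    ∀ n : ℕ, ∀ x ∈ Icc (0:ℝ) 1, h (tent^[n] x) = g^[n] (h x) := by
  intro n
  induction n with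
  | zero => intro x _; simp
  | succ n ih =>
    intro x hx
    rw [Function.iterate_succ_apply', Function.iterate_succ_apply']
    rw [hconj _ (tent_mapsTo.iterate n hx), ih x hx]


/-- `ψ_t = h ∘ ξ_t ∘ h⁻¹` maps `μ_{n,k}(g)` to `μ_{n,kt}(g)` for
`k ≤ ⌊2^(n-1)/t⌋`. -/
theorem psi_t_on_mu
    (g h hinv : ℝ → ℝ) (μ : ℕ → ℕ → ℝ) (t : ℕ) (hg : IsUnimodal g)
    (hhc : ContinuousOn h (Icc 0 1)) (hhb : BijOn h (Icc 0 1) (Icc 0 1))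
    (hconj : ∀ x ∈ Icc (0:ℝ) 1, h (tent x) = g (h x))
    (hinvl : ∀ x ∈ Icc (0:ℝ) 1, hinv (h x) = x)
    (hinvr : ∀ x ∈ Icc (0:ℝ) 1, h (hinv x) = x)
    (hμ : IsMuFamily g μ) (ht : 1 ≤ t) :
    ∀ n : ℕ, 1 ≤ n → ∀ k ≤ 2^(n-1) / t,
      h (xi t (hinv (μ n k))) = μ n (k * t) := by
  obtain ⟨v, hgc, hgm, hv, hmonog, hantig, hg0, hg1, hgv⟩ := hg
  have h0mem : (0:ℝ) ∈ Icc (0:ℝ) 1 := by constructor <;> norm_num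
  have h1mem : (1:ℝ) ∈ Icc (0:ℝ) 1 := by constructor <;> norm_num
  -- h is strictly increasing
  have hmono : StrictMonoOn h (Icc 0 1) := by
    rcases ContinuousOn.strictMonoOn_of_injOn_Icc' (by norm_num : (0:ℝ) ≤ 1) hhc hhb.injOn
      with hm | ha
    · exact hm
    · exfalso
      obtain ⟨x, hx, hx1⟩ := hhb.surjOn h1mem
      have hle : h x ≤ h 0 := by
        rcases eq_or_lt_of_le hx.1 with he | hlt
        · rw [← he]
        · exact (ha h0mem hx hlt).le
      have hh0 : h 0 = 1 := le_antisymm (hhb.mapsTo h0mem).2 (hx1 ▸ hle)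
      have e := hconj 0 h0mem
      rw [show tent 0 = 0 from by unfold tent; norm_num, hh0, hg1] at e
      norm_num at e
  have hh0 : h 0 = 0 := by
    obtain ⟨x, hx, hx0⟩ := hhb.surjOn h0mem
    have hle : h 0 ≤ h x := by
      rcases eq_or_lt_of_le hx.1 with he | hlt
      · rw [← he]
      · exact (hmono h0mem hx hlt).le
    exact le_antisymm (hx0 ▸ hle) (hhb.mapsTo h0mem).1
  intro n hn k hk
  obtain ⟨p, rfl⟩ : ∃ p, n = p + 1 := ⟨n - 1, by omega⟩
  simp only [Nat.add_sub_cancel] at hk ⊢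
  obtain ⟨hmem, hstep, hcover⟩ := hμ (p+1) (by omega)
  simp only [Nat.add_sub_cancel] at hmem hstep hcover
  set N : ℕ := 2^p with hN
  have hP : (0:ℝ) < 2^p := by positivity
  have hdiv_mem : ∀ j : ℕ, j ≤ N → ((j:ℝ)/2^p) ∈ Icc (0:ℝ) 1 := by
    intro j hj
    constructor
    · positivity
    · rw [div_le_one hP]; exact_mod_cast hj
  have μlt : ∀ a b, a < b → b ≤ N → μ (p+1) a < μ (p+1) b := by
    intro a b hab hbN
    induction b with
    | zero => omega
    | succ b ih =>
      rcases Nat.lt_succ_iff_lt_or_eq.mp hab with h' | h'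
      · exact lt_trans (ih h' (by omega)) (hstep b (by omega))
      · subst h'; exact hstep a (by omega)
  have νzero : ∀ j ≤ N, g^[p+1] (h ((j:ℝ)/2^p)) = 0 := by
    intro j hj
    rw [← conj_iter g h hconj (p+1) _ (hdiv_mem j hj), tent_iter_zero' p j hj, hh0]
  have νlt : ∀ a b : ℕ, a < b → b ≤ N → h ((a:ℝ)/2^p) < h ((b:ℝ)/2^p) := by
    intro a b hab hbN
    apply hmono (hdiv_mem a (by omega)) (hdiv_mem b hbN)
    have hab' : (a:ℝ) < (b:ℝ) := by exact_mod_cast hab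
    exact (div_lt_div_iff_of_pos_right hP).mpr hab'
  have exσ : ∀ j, ∃ s, (j ≤ N → s ≤ N ∧ h ((j:ℝ)/2^p) = μ (p+1) s) := by
    intro j
    by_cases hj : j ≤ N
    · obtain ⟨s, hs, he⟩ := hcover _ (hhb.mapsTo (hdiv_mem j hj)) (νzero j hj)
      exact ⟨s, fun _ => ⟨hs, he⟩⟩
    · exact ⟨0, fun hc => absurd hc hj⟩
  choose σ hσ using exσ
  have σlt : ∀ a b, a < b → b ≤ N → σ a < σ b := by
    intro a b hab hbN
    have ha := hσ a (by omega)
    have hb := hσ b hbN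
    by_contra hc
    push_neg at hc
    rcases eq_or_lt_of_le hc with he | hlt
    · have hv2 := νlt a b hab hbN
      rw [ha.2, hb.2, he] at hv2
      exact lt_irrefl _ hv2
    · have hv2 := μlt _ _ hlt ha.1
      rw [← ha.2, ← hb.2] at hv2
      exact absurd (νlt a b hab hbN) (not_lt.mpr hv2.le)
  have σge : ∀ j, j ≤ N → j ≤ σ j := by
    intro j
    induction j with
    | zero => intro _; exact Nat.zero_le _
    | succ j ih =>
      intro hj
      have h1 := σlt j (j+1) (by omega) hj
      have h2 := ih (by omega)
      omega
  have σshift : ∀ d j, j + d ≤ N → σ j + d ≤ σ (j + d) := by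
    intro d
    induction d with
    | zero => intro j _; simp
    | succ d ih =>
      intro j hj
      have h1 := ih j (by omega)
      have h2 := σlt (j+d) (j+d+1) (by omega) (by omega)
      have e : j + (d+1) = j + d + 1 := by omega
      rw [e]
      omega
  have key : ∀ j ≤ N, μ (p+1) j = h ((j:ℝ)/2^p) := by
    intro j hj
    have h1 := σshift (N - j) j (by omega)
    have h2 := (hσ N le_rfl).1
    have e : j + (N - j) = N := by omega
    rw [e] at h1
    have hid : σ j = j := le_antisymm (by omega) (σge j hj)
    rw [(hσ j hj).2, hid]
  -- now the computation
  have hNt : k * t ≤ N := (Nat.le_div_iff_mul_le (by omega)).mp hk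
  have hkN : k ≤ N := le_trans (Nat.le_mul_of_pos_right k (by omega)) hNt
  rw [key k hkN, hinvl _ (hdiv_mem k hkN)]
  have hx : xi t ((k:ℝ)/2^p) = ((k*t:ℕ):ℝ)/2^p := by
    unfold xi
    have he : (t:ℝ) * ((k:ℝ)/2^p) = ((k*t:ℕ):ℝ)/2^p := by push_cast; ring
    rw [he]
    rcases lt_or_eq_of_le hNt with hlt | heq
    · have hx0 : (0:ℝ) ≤ ((k*t:ℕ):ℝ)/2^p := by positivity
      have hx1 : ((k*t:ℕ):ℝ)/2^p < 1 := by
        rw [div_lt_one hP]; exact_mod_cast hlt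
      rw [Int.floor_eq_zero_iff.mpr ⟨hx0, hx1⟩, Int.fract_eq_self.mpr ⟨hx0, hx1⟩]
      norm_num
    · have hx1 : ((k*t:ℕ):ℝ)/2^p = 1 := by
        rw [div_eq_one_iff_eq (ne_of_gt hP)]; exact_mod_cast heq
      rw [hx1]
      norm_num
  rw [hx]
  exact (key (k*t) hNt).symm
end

section
/- Let g be a piecewise linear unimodal map and let a ∈ (0,1) be the first (smallest) positive kink of g, so g is linear on [0,a] with slope g′(0). Then for every n ≥ 1 and every k with 0 ≤ k ≤ 2^{n−1} such that μ_{n,k}(g) < a, one has μ_{n,2k}(g) = g′(0)·μ_{n,k}(g). -/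
open Set

section Aux

variable {g : ℝ → ℝ} {v : ℝ} {μ : ℕ → ℕ → ℝ}

private lemma seq_lt {f : ℕ → ℝ} {M : ℕ} (h : ∀ i < M, f i < f (i+1)) :
    ∀ i j, i < j → j ≤ M → f i < f j := by
  intro i j hij hjM
  induction j with
  | zero => omega
  | succ j ih =>
    rcases Nat.lt_succ_iff_lt_or_eq.mp hij with h' | h'
    · exact (ih h' (by omega)).trans (h j (by omega))
    · subst h'; exact h i (by omega)

private lemma mu_lt (hμ : IsMuFamily g μ) {N : ℕ} (hN : 1 ≤ N) {i j : ℕ}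
    (hij : i < j) (hj : j ≤ 2^(N-1)) : μ N i < μ N j :=
  seq_lt (hμ N hN).2.1 i j hij hj

private lemma mu_le (hμ : IsMuFamily g μ) {N : ℕ} (hN : 1 ≤ N) {i j : ℕ}
    (hij : i ≤ j) (hj : j ≤ 2^(N-1)) : μ N i ≤ μ N j := by
  rcases eq_or_lt_of_le hij with rfl | h
  · exact le_rfl
  · exact (mu_lt hμ hN h hj).le

private lemma mu_inj (hμ : IsMuFamily g μ) {N : ℕ} (hN : 1 ≤ N) {i j : ℕ}
    (hi : i ≤ 2^(N-1)) (hj : j ≤ 2^(N-1)) (h : μ N i = μ N j) : i = j := by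
  rcases lt_trichotomy i j with hc | hc | hc
  · exact absurd h (ne_of_lt (mu_lt hμ hN hc hj))
  · exact hc
  · exact absurd h.symm (ne_of_lt (mu_lt hμ hN hc hi))

private lemma mu_mem (hμ : IsMuFamily g μ) {N : ℕ} (hN : 1 ≤ N) {k : ℕ}
    (hk : k ≤ 2^(N-1)) : μ N k ∈ Icc (0:ℝ) 1 ∧ g^[N] (μ N k) = 0 :=
  (hμ N hN).1 k hk

private lemma mu_zero (hg : IsUnimodalWith g v) (hμ : IsMuFamily g μ) {N : ℕ}
    (hN : 1 ≤ N) : μ N 0 = 0 := by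
  obtain ⟨cont, maps, hv, mono, anti, g0, g1, gv⟩ := hg
  have h0 : g^[N] (0:ℝ) = 0 := Function.iterate_fixed g0 N
  obtain ⟨k, hk, hke⟩ := (hμ N hN).2.2 0 ⟨le_rfl, zero_le_one⟩ h0
  rcases Nat.eq_zero_or_pos k with rfl | hpos
  · exact hke.symm
  · have := mu_lt hμ hN hpos hk
    have h1 := (mu_mem hμ hN (Nat.zero_le k |>.trans hk)).1.1
    rw [← hke] at this
    linarith

private lemma mu_top (hg : IsUnimodalWith g v) (hμ : IsMuFamily g μ) (m : ℕ) :
    μ (m+1) (2^m) = 1 := by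
  obtain ⟨cont, maps, hv, mono, anti, g0, g1, gv⟩ := hg
  have h1 : g^[m+1] (1:ℝ) = 0 := by
    rw [Function.iterate_succ_apply, g1]
    exact Function.iterate_fixed g0 m
  have hN : 1 ≤ m + 1 := Nat.le_add_left 1 m
  obtain ⟨k, hk, hke⟩ := (hμ (m+1) hN).2.2 1 ⟨zero_le_one, le_rfl⟩ h1
  have hk' : k ≤ 2^m := hk
  rcases eq_or_lt_of_le hk' with rfl | hlt
  · exact hke.symm
  · exfalso
    have := mu_lt hμ hN hlt (le_refl (2^m) : (2:ℕ)^m ≤ 2^((m+1)-1))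
    rw [← hke] at this
    have h2 := (mu_mem hμ hN (le_refl (2^m) : (2:ℕ)^m ≤ 2^((m+1)-1))).1.2
    linarith

private lemma surjL (hg : IsUnimodalWith g v) {y : ℝ} (hy : y ∈ Icc (0:ℝ) 1) :
    ∃ x ∈ Icc 0 v, g x = y := by
  obtain ⟨cont, maps, hv, mono, anti, g0, g1, gv⟩ := hg
  have hsub : Icc (0:ℝ) v ⊆ Icc 0 1 := Icc_subset_Icc le_rfl hv.2.le
  have h := intermediate_value_Icc hv.1.le (cont.mono hsub)
  rw [g0, gv] at h
  obtain ⟨x, hx, hgx⟩ := h hy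
  exact ⟨x, hx, hgx⟩

private lemma surjR (hg : IsUnimodalWith g v) {y : ℝ} (hy : y ∈ Icc (0:ℝ) 1) :
    ∃ x ∈ Icc v 1, g x = y := by
  obtain ⟨cont, maps, hv, mono, anti, g0, g1, gv⟩ := hg
  have hsub : Icc v (1:ℝ) ⊆ Icc 0 1 := Icc_subset_Icc hv.1.le le_rfl
  have h := intermediate_value_Icc' hv.2.le (cont.mono hsub)
  rw [g1, gv] at h
  obtain ⟨x, hx, hgx⟩ := h hy
  exact ⟨x, hx, hgx⟩

/-- On the increasing branch, `g` sends the `k`-th zero of `g^[m+2]` to the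
`k`-th zero of `g^[m+1]`. -/
private lemma branchL (hg : IsUnimodalWith g v) (hμ : IsMuFamily g μ) (m : ℕ) :
    ∀ k, k ≤ 2^(m+1) → μ (m+2) k ≤ v →
      g (μ (m+2) k) = μ (m+1) k ∧ k ≤ 2^m := by
  have hgg := hg
  obtain ⟨cont, maps, hv, mono, anti, g0, g1, gv⟩ := hgg
  have hN2 : 1 ≤ m + 2 := by omega
  have hN1 : 1 ≤ m + 1 := by omega
  intro k
  induction k using Nat.strong_induction_on with
  | _ k IH =>
    intro hk hkv
    have hmem := mu_mem hμ hN2 (show k ≤ 2^((m+2)-1) from hk)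
    have hIcc : μ (m+2) k ∈ Icc (0:ℝ) 1 := hmem.1
    have hIccv : μ (m+2) k ∈ Icc (0:ℝ) v := ⟨hIcc.1, hkv⟩
    have hgIcc : g (μ (m+2) k) ∈ Icc (0:ℝ) 1 := maps hIcc
    have hit : g^[m+1] (g (μ (m+2) k)) = 0 := by
      rw [← Function.iterate_succ_apply]
      exact hmem.2
    obtain ⟨j, hj0, hje⟩ := (hμ (m+1) hN1).2.2 _ hgIcc hit
    have hj : j ≤ 2^m := hj0
    -- j ≥ k
    have hjk : k ≤ j := by
      rcases Nat.eq_zero_or_pos k with rfl | hpos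
      · exact Nat.zero_le j
      · obtain ⟨k', rfl⟩ : ∃ k', k = k' + 1 := ⟨k - 1, by omega⟩
        have hk'le : k' ≤ 2^(m+1) := by omega
        have hk'v : μ (m+2) k' ≤ v :=
          le_of_lt (lt_of_lt_of_le (mu_lt hμ hN2 (Nat.lt_succ_self k') hk) hkv)
        obtain ⟨e1, e2⟩ := IH k' (Nat.lt_succ_self k') hk'le hk'v
        have hlt : μ (m+2) k' < μ (m+2) (k'+1) := mu_lt hμ hN2 (Nat.lt_succ_self k') hk
        have hmemk' := mu_mem hμ hN2 (show k' ≤ 2^((m+2)-1) from hk'le)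
        have hglt : g (μ (m+2) k') < g (μ (m+2) (k'+1)) :=
          mono ⟨hmemk'.1.1, hk'v⟩ hIccv hlt
        rw [e1, hje] at hglt
        by_contra hcon
        have : μ (m+1) j ≤ μ (m+1) k' :=
          mu_le hμ hN1 (by omega) (show k' ≤ 2^((m+1)-1) from e2)
        linarith
    -- j ≤ k
    have hkj : j ≤ k := by
      by_contra hcon
      push_neg at hcon
      have hkb : k ≤ 2^m := by omega
      have hymem := (mu_mem hμ hN1 (show k ≤ 2^((m+1)-1) from hkb)).1
      obtain ⟨x, hx, hgx⟩ := surjL hg hymem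
      have hxIcc : x ∈ Icc (0:ℝ) 1 := ⟨hx.1, hx.2.trans hv.2.le⟩
      have hxit : g^[m+2] x = 0 := by
        rw [Function.iterate_succ_apply, hgx]
        exact (mu_mem hμ hN1 (show k ≤ 2^((m+1)-1) from hkb)).2
      obtain ⟨k'', hk''0, hk''e⟩ := (hμ (m+2) hN2).2.2 x hxIcc hxit
      have hk'' : k'' ≤ 2^(m+1) := hk''0
      have hlt1 : μ (m+1) k < μ (m+1) j := mu_lt hμ hN1 hcon hj0
      have hlt2 : g x < g (μ (m+2) k) := by rw [hgx, hje]; exact hlt1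
      have hxlt : x < μ (m+2) k := by
        by_contra hc2
        push_neg at hc2
        rcases eq_or_lt_of_le hc2 with heq | hlt3
        · rw [heq] at hlt2; linarith
        · exact absurd (mono hIccv hx hlt3) (by linarith)
      have hklt : k'' < k := by
        by_contra hc3
        push_neg at hc3
        have := mu_le hμ hN2 hc3 (show k'' ≤ 2^((m+2)-1) from hk'')
        rw [← hk''e] at this
        linarith
      obtain ⟨f1, f2⟩ := IH k'' hklt hk'' (by rw [← hk''e]; exact hx.2)
      rw [← hk''e, hgx] at f1
      have : k'' = k := mu_inj hμ hN1 (show k'' ≤ 2^((m+1)-1) from f2)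
        (show k ≤ 2^((m+1)-1) from hkb) f1.symm
      omega
    have hjek : j = k := le_antisymm hkj hjk
    exact ⟨by rw [hje, hjek], by omega⟩

/-- `v` is the `2^m`-th zero of `g^[m+2]`. -/
private lemma v_idx (hg : IsUnimodalWith g v) (hμ : IsMuFamily g μ) (m : ℕ) :
    μ (m+2) (2^m) = v := by
  have hgg := hg
  obtain ⟨cont, maps, hv, mono, anti, g0, g1, gv⟩ := hgg
  have hN2 : 1 ≤ m + 2 := by omega
  have hN1 : 1 ≤ m + 1 := by omega
  have hvIcc : v ∈ Icc (0:ℝ) 1 := ⟨hv.1.le, hv.2.le⟩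
  have hvit : g^[m+2] v = 0 := by
    rw [Function.iterate_succ_apply, gv, Function.iterate_succ_apply, g1]
    exact Function.iterate_fixed g0 m
  obtain ⟨K, hK0, hKe⟩ := (hμ (m+2) hN2).2.2 v hvIcc hvit
  have hK : K ≤ 2^(m+1) := hK0
  obtain ⟨hb, hKm⟩ := branchL hg hμ m K hK (le_of_eq hKe.symm)
  rw [← hKe, gv] at hb
  have htop : μ (m+1) (2^m) = 1 := mu_top hg hμ m
  have : K = 2^m := mu_inj hμ hN1 (show K ≤ 2^((m+1)-1) from hKm)
    (le_refl (2^m) : (2:ℕ)^m ≤ 2^((m+1)-1)) (by rw [← hb, htop])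
  rw [← this, ← hKe]

/-- On the decreasing branch (indexed from the right). -/
private lemma branchR (hg : IsUnimodalWith g v) (hμ : IsMuFamily g μ) (m : ℕ) :
    ∀ d, d ≤ 2^(m+1) → v ≤ μ (m+2) (2^(m+1) - d) →
      g (μ (m+2) (2^(m+1) - d)) = μ (m+1) d ∧ d ≤ 2^m := by
  have hgg := hg
  obtain ⟨cont, maps, hv, mono, anti, g0, g1, gv⟩ := hgg
  have hN2 : 1 ≤ m + 2 := by omega
  have hN1 : 1 ≤ m + 1 := by omega
  intro d
  induction d using Nat.strong_induction_on with
  | _ d IH =>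
    intro hd hdv
    set K := 2^(m+1) - d with hKdef
    have hKle : K ≤ 2^(m+1) := by omega
    have hmem := mu_mem hμ hN2 (show K ≤ 2^((m+2)-1) from hKle)
    have hIcc : μ (m+2) K ∈ Icc (0:ℝ) 1 := hmem.1
    have hIccv : μ (m+2) K ∈ Icc v (1:ℝ) := ⟨hdv, hIcc.2⟩
    have hgIcc : g (μ (m+2) K) ∈ Icc (0:ℝ) 1 := maps hIcc
    have hit : g^[m+1] (g (μ (m+2) K)) = 0 := by
      rw [← Function.iterate_succ_apply]
      exact hmem.2
    obtain ⟨j, hj0, hje⟩ := (hμ (m+1) hN1).2.2 _ hgIcc hit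
    have hj : j ≤ 2^m := hj0
    -- j ≥ d
    have hjd : d ≤ j := by
      rcases Nat.eq_zero_or_pos d with rfl | hpos
      · exact Nat.zero_le j
      · have hK1 : 2^(m+1) - (d-1) = K + 1 := by omega
        have hK1le : K + 1 ≤ 2^(m+1) := by omega
        have hlt : μ (m+2) K < μ (m+2) (K+1) := mu_lt hμ hN2 (Nat.lt_succ_self K) hK1le
        have hK1v : v ≤ μ (m+2) (K+1) := hdv.trans hlt.le
        obtain ⟨e1, e2⟩ := IH (d-1) (by omega) (by omega) (by rw [hK1]; exact hK1v)
        rw [hK1] at e1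
        have hmemK1 := mu_mem hμ hN2 (show K+1 ≤ 2^((m+2)-1) from hK1le)
        have hglt : g (μ (m+2) (K+1)) < g (μ (m+2) K) :=
          anti hIccv ⟨hK1v, hmemK1.1.2⟩ hlt
        rw [e1, hje] at hglt
        by_contra hcon
        have : μ (m+1) j ≤ μ (m+1) (d-1) :=
          mu_le hμ hN1 (by omega) (show d-1 ≤ 2^((m+1)-1) from e2)
        linarith
    -- j ≤ d
    have hdj : j ≤ d := by
      by_contra hcon
      push_neg at hcon
      have hdb : d ≤ 2^m := by omega
      have hymem := (mu_mem hμ hN1 (show d ≤ 2^((m+1)-1) from hdb)).1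
      obtain ⟨x, hx, hgx⟩ := surjR hg hymem
      have hxIcc : x ∈ Icc (0:ℝ) 1 := ⟨hv.1.le.trans hx.1, hx.2⟩
      have hxit : g^[m+2] x = 0 := by
        rw [Function.iterate_succ_apply, hgx]
        exact (mu_mem hμ hN1 (show d ≤ 2^((m+1)-1) from hdb)).2
      obtain ⟨k'', hk''0, hk''e⟩ := (hμ (m+2) hN2).2.2 x hxIcc hxit
      have hk'' : k'' ≤ 2^(m+1) := hk''0
      have hlt1 : μ (m+1) d < μ (m+1) j := mu_lt hμ hN1 hcon hj0
      have hlt2 : g x < g (μ (m+2) K) := by rw [hgx, hje]; exact hlt1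
      have hxgt : μ (m+2) K < x := by
        by_contra hc2
        push_neg at hc2
        rcases eq_or_lt_of_le hc2 with heq | hlt3
        · rw [← heq] at hlt2; linarith
        · exact absurd (anti hx hIccv hlt3) (by linarith)
      have hkgt : K < k'' := by
        by_contra hc3
        push_neg at hc3
        have := mu_le hμ hN2 hc3 (show K ≤ 2^((m+2)-1) from hKle)
        rw [← hk''e] at this
        linarith
      have hd'' : 2^(m+1) - k'' < d := by omega
      have hkk : 2^(m+1) - (2^(m+1) - k'') = k'' := by omega
      obtain ⟨f1, f2⟩ := IH (2^(m+1) - k'') hd'' (by omega)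
        (by rw [hkk, ← hk''e]; exact hx.1)
      rw [hkk, ← hk''e, hgx] at f1
      have : 2^(m+1) - k'' = d := mu_inj hμ hN1 (show 2^(m+1)-k'' ≤ 2^((m+1)-1) from f2)
        (show d ≤ 2^((m+1)-1) from hdb) f1.symm
      omega
    have hjed : j = d := le_antisymm hdj hjd
    exact ⟨by rw [hje, hjed], by omega⟩

/-- Interleaving: the even-indexed zeros of `g^[m+2]` are the zeros of `g^[m+1]`. -/
private lemma interleave (hg : IsUnimodalWith g v) (hμ : IsMuFamily g μ) :
    ∀ m, ∀ j ≤ 2^m, μ (m+2) (2*j) = μ (m+1) j := by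
  have hgg := hg
  obtain ⟨cont, maps, hv, mono, anti, g0, g1, gv⟩ := hgg
  intro m
  induction m with
  | zero =>
    intro j hj
    interval_cases j
    · rw [show 2*0 = 0 from rfl, mu_zero hg hμ (show (1:ℕ) ≤ 2 by omega),
        mu_zero hg hμ (le_refl 1)]
    · rw [show 2*1 = 2 from rfl]
      have h2 : μ 2 2 = 1 := mu_top hg hμ 1
      have h1 : μ 1 1 = 1 := mu_top hg hμ 0
      rw [h2, h1]
  | succ m IH =>
    intro j hj
    have hN3 : 1 ≤ m + 3 := by omega
    have hN2 : 1 ≤ m + 2 := by omega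
    have hN1 : 1 ≤ m + 1 := by omega
    have hp1 : (2:ℕ)^(m+1) = 2 * 2^m := by ring
    have hp2 : (2:ℕ)^(m+2) = 2 * 2^(m+1) := by ring
    rcases le_or_gt j (2^m) with hc | hc
    · -- increasing branch
      have h1 : μ (m+2) j ≤ v := by
        rw [← v_idx hg hμ m]
        exact mu_le hμ hN2 hc (show (2:ℕ)^m ≤ 2^((m+2)-1) from (by omega : (2:ℕ)^m ≤ 2^(m+1)))
      have h2 : μ (m+3) (2*j) ≤ v := by
        rw [← v_idx hg hμ (m+1)]
        exact mu_le hμ hN3 (by omega)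
          (show (2:ℕ)^(m+1) ≤ 2^((m+3)-1) from (by omega : (2:ℕ)^(m+1) ≤ 2^(m+2)))
      obtain ⟨e1, -⟩ := branchL hg hμ (m+1) (2*j) (by omega) h2
      have e2 := IH j hc
      obtain ⟨e3, -⟩ := branchL hg hμ m j (by omega) h1
      have hm1 : μ (m+3) (2*j) ∈ Icc (0:ℝ) v :=
        ⟨(mu_mem hμ hN3 (show 2*j ≤ 2^((m+3)-1) from (by omega : 2*j ≤ 2^(m+2)))).1.1, h2⟩
      have hm2 : μ (m+2) j ∈ Icc (0:ℝ) v :=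
        ⟨(mu_mem hμ hN2 (show j ≤ 2^((m+2)-1) from (by omega : j ≤ 2^(m+1)))).1.1, h1⟩
      exact mono.injOn hm1 hm2 (by rw [e1, e2, ← e3])
    · -- decreasing branch
      have h1 : v ≤ μ (m+2) j := by
        rw [← v_idx hg hμ m]
        exact mu_le hμ hN2 hc.le (show j ≤ 2^((m+2)-1) from hj)
      have h2 : v ≤ μ (m+3) (2*j) := by
        rw [← v_idx hg hμ (m+1)]
        exact mu_le hμ hN3 (by omega)
          (show 2*j ≤ 2^((m+3)-1) from (by omega : 2*j ≤ 2^(m+2)))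
      have hd1 : 2^(m+2) - (2^(m+2) - 2*j) = 2*j := by omega
      obtain ⟨e1, -⟩ := branchR hg hμ (m+1) (2^(m+2) - 2*j) (by omega) (by rw [hd1]; exact h2)
      rw [hd1] at e1
      have hd2 : (2:ℕ)^(m+2) - 2*j = 2*(2^(m+1) - j) := by omega
      have e2 := IH (2^(m+1) - j) (by omega)
      have hd3 : 2^(m+1) - (2^(m+1) - j) = j := by omega
      obtain ⟨e3, -⟩ := branchR hg hμ m (2^(m+1) - j) (by omega) (by rw [hd3]; exact h1)
      rw [hd3] at e3
      have hm1 : μ (m+3) (2*j) ∈ Icc v (1:ℝ) :=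
        ⟨h2, (mu_mem hμ hN3 (show 2*j ≤ 2^((m+3)-1) from (by omega : 2*j ≤ 2^(m+2)))).1.2⟩
      have hm2 : μ (m+2) j ∈ Icc v (1:ℝ) :=
        ⟨h1, (mu_mem hμ hN2 (show j ≤ 2^((m+2)-1) from hj)).1.2⟩
      exact anti.injOn hm1 hm2 (by rw [e1, hd2, e2, ← e3])

end Aux

/-- if `g` is linear with slope `s` on `[0,a]`, where `a` is its first
positive kink, then `μ_{n,2k}(g) = s·μ_{n,k}(g)` whenever `μ_{n,k}(g) < a`. -/
theorem mu_doubling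
    (g : ℝ → ℝ) (μ : ℕ → ℕ → ℝ) (a s : ℝ)
    (hg : IsUnimodal g) (hgPL : IsPiecewiseLinear g)
    (ha : a ∈ Ioo (0:ℝ) 1) (hak : FirstKink g a)
    (hs : ∀ x ∈ Icc (0:ℝ) a, g x = s * x)
    (hμ : IsMuFamily g μ) :
    ∀ n : ℕ, 1 ≤ n → ∀ k ≤ 2^(n-1), μ n k < a → μ n (2*k) = s * μ n k := by
  obtain ⟨v, hgv⟩ := hg
  have hgg := hgv
  obtain ⟨cont, maps, hv, mono, anti, g0, g1, gv⟩ := hgg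
  -- s > 0
  have hspos : 0 < s := by
    set t := min a v with ht
    have htpos : 0 < t := lt_min ha.1 hv.1
    have hta : t ∈ Icc (0:ℝ) a := ⟨htpos.le, min_le_left _ _⟩
    have hgt : g t = s * t := hs t hta
    have h0t : (0:ℝ) ∈ Icc (0:ℝ) v := ⟨le_rfl, hv.1.le⟩
    have htv : t ∈ Icc (0:ℝ) v := ⟨htpos.le, min_le_right _ _⟩
    have := mono h0t htv htpos
    rw [g0, hgt] at this
    by_contra hc
    push_neg at hc
    nlinarith
  -- a ≤ v
  have hav : a ≤ v := by
    by_contra hc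
    push_neg at hc
    have hsv : g v = s * v := hs v ⟨hv.1.le, hc.le⟩
    rw [gv] at hsv
    have hga : g a = s * a := hs a ⟨ha.1.le, le_rfl⟩
    have hga1 : g a ≤ 1 := (maps ⟨ha.1.le, ha.2.le⟩).2
    rw [hga] at hga1
    nlinarith
  intro n hn k hk hlt
  match n, hn with
  | 1, _ =>
    have hk1 : k ≤ 1 := hk
    have htop : μ 1 1 = 1 := mu_top hgv hμ 0
    interval_cases k
    · rw [show 2*0 = 0 from rfl, mu_zero hgv hμ (le_refl 1)]
      ring
    · rw [htop] at hlt; linarith [ha.2]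
  | (m+2), _ =>
    have hN2 : 1 ≤ m + 2 := by omega
    have hN1 : 1 ≤ m + 1 := by omega
    have hk' : k ≤ 2^(m+1) := hk
    have hkv : μ (m+2) k < v := lt_of_lt_of_le hlt hav
    have hk2 : k ≤ 2^m := by
      by_contra hc
      push_neg at hc
      have := mu_lt hμ hN2 hc (show k ≤ 2^((m+2)-1) from hk')
      rw [v_idx hgv hμ m] at this
      linarith
    have e2 := interleave hgv hμ m k hk2
    obtain ⟨e3, -⟩ := branchL hgv hμ m k hk' hkv.le
    have e4 : g (μ (m+2) k) = s * μ (m+2) k :=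
      hs _ ⟨(mu_mem hμ hN2 (show k ≤ 2^((m+2)-1) from hk')).1.1, hlt.le⟩
    rw [e2, ← e3, e4]
end

section
/- Let t ≥ 2 be a positive integer that is not a power of 2, and let k ≥ 1 and n ≥ 1 be integers. Then the set { k·t^p / 2^{n+m} : p a nonnegative integer, m an integer } ∩ [1/2^n, 1/2^{n−1}) is dense in the interval [1/2^n, 1/2^{n−1}). -/
open Set

lemma my_logb_irrational {t : ℕ} (ht : 2 ≤ t) (htp : ¬ ∃ j : ℕ, t = 2^j) :
    Irrational (Real.logb 2 t) := by
  rintro ⟨q, hq⟩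
  have ht0 : (0:ℝ) < t := by positivity
  have hα : (0:ℝ) < Real.logb 2 t := Real.logb_pos one_lt_two (by exact_mod_cast ht)
  have hq0 : 0 < q := by
    rw [← hq] at hα; exact_mod_cast hα
  have hnum : 0 < q.num := Rat.num_pos.mpr hq0
  -- t = 2 ^ (q : ℝ)
  have htq : (t:ℝ) = (2:ℝ) ^ (q:ℝ) := by
    rw [hq, Real.rpow_logb two_pos (by norm_num) ht0]
  have key : (t:ℝ) ^ (q.den : ℕ) = (2:ℝ) ^ (q.num.toNat : ℕ) := by
    rw [htq, ← Real.rpow_natCast ((2:ℝ) ^ (q:ℝ)) q.den, ← Real.rpow_mul (by norm_num)]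
    rw [← Real.rpow_natCast 2 q.num.toNat]
    congr 1
    have : ((q * (q.den:ℚ) : ℚ) : ℝ) = (q:ℝ) * (q.den:ℝ) := by push_cast; ring
    rw [← this, Rat.mul_den_eq_num]
    rw [Rat.cast_intCast]
    exact_mod_cast (congrArg (Int.cast : ℤ → ℝ) (Int.toNat_of_nonneg hnum.le)).symm
  have keyn : t ^ q.den = 2 ^ q.num.toNat := by
    exact_mod_cast key
  have hdvd : t ∣ 2 ^ q.num.toNat := by
    rw [← keyn]; exact dvd_pow_self t q.den_nz
  obtain ⟨i, -, hi⟩ := (Nat.dvd_prime_pow Nat.prime_two).mp hdvd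
  exact htp ⟨i, hi⟩


lemma my_dense_closure {α : ℝ} (hirr : Irrational α) :
    Dense (AddSubgroup.closure ({α, 1} : Set ℝ) : Set ℝ) := by
  rcases (AddSubgroup.closure ({α, 1} : Set ℝ)).dense_or_cyclic with h | ⟨a, ha⟩
  · exact h
  · exfalso
    have h1 : (1:ℝ) ∈ AddSubgroup.closure ({α, 1} : Set ℝ) :=
      AddSubgroup.subset_closure (by simp)
    have hα : α ∈ AddSubgroup.closure ({α, 1} : Set ℝ) :=
      AddSubgroup.subset_closure (by simp)
    rw [ha, AddSubgroup.mem_closure_singleton] at h1 hα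
    obtain ⟨nq, hnq⟩ := h1
    obtain ⟨np, hnp⟩ := hα
    rw [zsmul_eq_mul] at hnq hnp
    have hnq0 : (nq:ℝ) ≠ 0 := by
      intro h0; rw [h0, zero_mul] at hnq; exact one_ne_zero hnq.symm
    refine hirr ⟨(np : ℚ) / (nq : ℚ), ?_⟩
    push_cast
    rw [div_eq_iff hnq0, ← hnp]
    nth_rewrite 1 [← mul_one (np:ℝ)]
    rw [← hnq]
    ring

lemma my_lemB {α : ℝ} (hirr : Irrational α) (c δ : ℝ) (hδ : 0 < δ) :
    ∃ (p : ℕ) (m : ℤ), c ≤ (p:ℝ) * α - m ∧ (p:ℝ) * α - m < c + δ := by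
  -- get a small positive element g of ℤα + ℤ with 0 < g < min δ 1
  obtain ⟨g, hgS, hg0, hglt⟩ :
      ∃ g ∈ AddSubgroup.closure ({α, 1} : Set ℝ), 0 < g ∧ g < min δ 1 := by
    obtain ⟨g, hgS, hg⟩ := (my_dense_closure hirr).exists_between (by positivity : (0:ℝ) < min δ 1)
    exact ⟨g, hgS, hg.1, hg.2⟩
  have hgδ : g < δ := lt_of_lt_of_le hglt (min_le_left _ _)
  have hg1 : g < 1 := lt_of_lt_of_le hglt (min_le_right _ _)
  rw [AddSubgroup.mem_closure_pair] at hgS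
  obtain ⟨a, b, hab⟩ := hgS
  rw [zsmul_eq_mul, zsmul_eq_mul, mul_one] at hab
  have ha0 : a ≠ 0 := by
    rintro rfl
    rw [Int.cast_zero, zero_mul, zero_add] at hab
    have hb0 : (0:ℤ) < b := by exact_mod_cast hg0.trans_eq hab.symm
    have hb1 : (1:ℝ) ≤ (b:ℝ) := by exact_mod_cast hb0
    rw [hab] at hb1
    linarith [hg1]
  rcases ha0.lt_or_gt with haneg | hapos
  · -- a < 0 : q•α = b - g with q = (-a).toNat
    set q : ℕ := (-a).toNat with hq
    have hqa : (q:ℝ) = -(a:ℝ) := by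
      have : ((-a).toNat : ℤ) = -a := Int.toNat_of_nonneg (by omega)
      exact_mod_cast congrArg (Int.cast : ℤ → ℝ) this
    -- target: find j : ℕ, N : ℤ with N - j*g ∈ [c, c+δ)
    set N : ℤ := ⌈c⌉ + 1 with hN
    have hw : (1:ℝ) ≤ (N:ℝ) - c := by
      have := Int.le_ceil c
      push_cast [hN]; linarith
    set w : ℝ := (N:ℝ) - c with hwdef
    set j : ℕ := ⌊w / g⌋₊ with hj
    have hjg_le : (j:ℝ) * g ≤ w := by
      have h1 : (j:ℝ) ≤ w / g := Nat.floor_le (by positivity)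
      calc (j:ℝ) * g ≤ (w / g) * g := by nlinarith
        _ = w := by field_simp
    have hjg_gt : w - g < (j:ℝ) * g := by
      have h1 : w / g < (j:ℝ) + 1 := Nat.lt_floor_add_one _
      have := (div_lt_iff₀ hg0).mp h1
      nlinarith
    refine ⟨j * q, j * b - N, ?_, ?_⟩
    · -- value = (j*q)α - (j*b - N) = N - j*g
      have hval : ((j*q : ℕ):ℝ) * α - ((j*b - N : ℤ):ℝ) = (N:ℝ) - (j:ℝ) * g := by
        push_cast
        rw [hqa]
        have : (a:ℝ) * α = g - b := by linarith [hab]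
        nlinarith [this]
      rw [hval]; linarith
    · have hval : ((j*q : ℕ):ℝ) * α - ((j*b - N : ℤ):ℝ) = (N:ℝ) - (j:ℝ) * g := by
        push_cast
        rw [hqa]
        have : (a:ℝ) * α = g - b := by linarith [hab]
        nlinarith [this]
      rw [hval]
      have : (j:ℝ) * g > w - δ := by linarith
      simp only [hwdef] at this
      linarith
  · -- a > 0 : q•α = g - b with q = a.toNat
    set q : ℕ := a.toNat with hq
    have hqa : (q:ℝ) = (a:ℝ) := by
      have : (a.toNat : ℤ) = a := Int.toNat_of_nonneg (by omega)
      exact_mod_cast congrArg (Int.cast : ℤ → ℝ) this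
    set M : ℤ := ⌈-c⌉ + 1 with hM
    have hu : (1:ℝ) ≤ c + (M:ℝ) := by
      have := Int.le_ceil (-c)
      push_cast [hM]; linarith
    set u : ℝ := c + (M:ℝ) with hudef
    set j : ℕ := ⌈u / g⌉₊ with hj
    have hjg_ge : u ≤ (j:ℝ) * g := by
      have h1 : u / g ≤ (j:ℝ) := Nat.le_ceil _
      calc u = (u / g) * g := by field_simp
        _ ≤ (j:ℝ) * g := by nlinarith
    have hjg_lt : (j:ℝ) * g < u + g := by
      have h1 : (j:ℝ) < u / g + 1 := Nat.ceil_lt_add_one (by positivity)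
      have h2 : (j:ℝ) * g ≤ (u / g + 1) * g := by nlinarith
      have h3 : (u / g + 1) * g = u + g := by field_simp
      nlinarith
    refine ⟨j * q, -(j * b) + M, ?_, ?_⟩
    · have hval : ((j*q : ℕ):ℝ) * α - ((-(j*b) + M : ℤ):ℝ) = (j:ℝ) * g - (M:ℝ) := by
        push_cast
        rw [hqa]
        have : (a:ℝ) * α = g - b := by linarith [hab]
        nlinarith [this]
      rw [hval]; simp only [hudef] at hjg_ge; linarith
    · have hval : ((j*q : ℕ):ℝ) * α - ((-(j*b) + M : ℤ):ℝ) = (j:ℝ) * g - (M:ℝ) := by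
        push_cast
        rw [hqa]
        have : (a:ℝ) * α = g - b := by linarith [hab]
        nlinarith [this]
      rw [hval]
      simp only [hudef] at hjg_lt
      linarith


/-- for `t ≥ 2` not a power of 2, `k ≥ 1` and `n ≥ 1`, the set
`{ k·t^p/2^(n+m) : p ∈ ℕ, m ∈ ℤ } ∩ [1/2^n, 1/2^(n-1))` is dense in `[1/2^n, 1/2^(n-1))`. -/
theorem dense_scaled_powers (t k n : ℕ) (ht : 2 ≤ t) (htp : ¬ ∃ j : ℕ, t = 2^j)
    (hk : 1 ≤ k) (hn : 1 ≤ n) :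
    Ico ((1:ℝ)/2^n) ((1:ℝ)/2^(n-1)) ⊆
      closure ({x : ℝ | ∃ (p : ℕ) (m : ℤ), x = (k:ℝ) * (t:ℝ)^p / (2:ℝ)^((n:ℤ)+m)} ∩
        Ico ((1:ℝ)/2^n) ((1:ℝ)/2^(n-1))) := by
  intro x hx
  set α : ℝ := Real.logb 2 t with hαdef
  have hirr : Irrational α := my_logb_irrational ht htp
  have hk0 : (0:ℝ) < k := by exact_mod_cast hk
  have ht0 : (0:ℝ) < t := by positivity
  have hx0 : 0 < x := lt_of_lt_of_le (by positivity) hx.1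
  set γ : ℝ := Real.logb 2 k with hγdef
  set c : ℝ := (n:ℝ) + Real.logb 2 x with hcdef
  -- bounds on c
  have hlow : Real.logb 2 ((1:ℝ)/2^n) = -(n:ℝ) := by
    rw [one_div, ← Real.rpow_natCast 2 n, ← Real.rpow_neg (by norm_num),
      Real.logb_rpow two_pos (by norm_num)]
  have hhigh : Real.logb 2 ((1:ℝ)/2^(n-1)) = -((n:ℝ) - 1) := by
    rw [one_div, ← Real.rpow_natCast 2 (n-1), ← Real.rpow_neg (by norm_num),
      Real.logb_rpow two_pos (by norm_num)]
    congr 1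
    push_cast [Nat.cast_sub hn]
    ring
  have hc0 : 0 ≤ c := by
    have := (Real.logb_le_logb one_lt_two (by positivity) hx0).mpr hx.1
    rw [hlow] at this
    simp only [hcdef]; linarith
  have hc1 : c < 1 := by
    have := (Real.logb_lt_logb_iff (b := 2) one_lt_two hx0 (by positivity)).mpr hx.2
    rw [hhigh] at this
    simp only [hcdef]; linarith
  -- x = 2 ^ (c - n)
  have hxeq : x = (2:ℝ) ^ (c - (n:ℝ)) := by
    rw [hcdef]
    ring_nf
    rw [Real.rpow_logb two_pos (by norm_num) hx0]
  -- continuity of f z = 2^(z - n) at c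
  set f : ℝ → ℝ := fun z => (2:ℝ) ^ (z - (n:ℝ)) with hfdef
  have hf : Continuous f := by
    have : f = fun z => Real.exp (Real.log 2 * (z - (n:ℝ))) := by
      funext z
      simp only [hfdef]
      rw [Real.rpow_def_of_pos two_pos]
    rw [this]
    fun_prop
  rw [Metric.mem_closure_iff]
  intro ε hε
  obtain ⟨δ₀, hδ₀, hfδ⟩ := Metric.continuousAt_iff.mp (hf.continuousAt (x := c)) ε hε
  set δ : ℝ := min δ₀ (1 - c) with hδdef
  have hδpos : 0 < δ := lt_min hδ₀ (by linarith)
  obtain ⟨p, m, hθ1, hθ2⟩ := my_lemB hirr (c - γ) δ hδpos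
  set θ : ℝ := γ + ((p:ℝ) * α - m) with hθdef
  have hθc : c ≤ θ ∧ θ < c + δ := by constructor <;> [linarith; linarith]
  have hθ01 : 0 ≤ θ ∧ θ < 1 := by
    constructor
    · linarith [hθc.1]
    · have : δ ≤ 1 - c := min_le_right _ _
      linarith [hθc.2]
  -- define y
  have hyeq : (k:ℝ) * (t:ℝ)^p / (2:ℝ)^((n:ℤ)+m) = f θ := by
    have hkeq : (k:ℝ) = (2:ℝ) ^ γ := (Real.rpow_logb two_pos (by norm_num) hk0).symm
    have hteq : (t:ℝ) = (2:ℝ) ^ α := (Real.rpow_logb two_pos (by norm_num) ht0).symm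
    have htp' : (t:ℝ)^p = (2:ℝ) ^ ((p:ℝ) * α) := by
      rw [hteq, ← Real.rpow_natCast ((2:ℝ) ^ α) p, ← Real.rpow_mul (by norm_num)]
      ring_nf
    have h2nm : (2:ℝ)^((n:ℤ)+m) = (2:ℝ) ^ (((n:ℤ)+m : ℤ) : ℝ) :=
      (Real.rpow_intCast 2 ((n:ℤ)+m)).symm
    rw [hkeq, htp', h2nm, ← Real.rpow_add two_pos, ← Real.rpow_sub two_pos]
    simp only [hfdef]
    congr 1
    simp only [hθdef]
    push_cast
    ring
  have h1 : (1:ℝ)/2^n = (2:ℝ) ^ (-(n:ℝ)) := by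
    rw [one_div, ← Real.rpow_natCast 2 n, ← Real.rpow_neg (by norm_num)]
  have h2 : (1:ℝ)/2^(n-1) = (2:ℝ) ^ (-((n:ℝ)-1)) := by
    rw [one_div, ← Real.rpow_natCast 2 (n-1), ← Real.rpow_neg (by norm_num)]
    congr 1
    push_cast [Nat.cast_sub hn]
    ring
  refine ⟨(k:ℝ) * (t:ℝ)^p / (2:ℝ)^((n:ℤ)+m), ⟨⟨p, m, rfl⟩, ?_, ?_⟩, ?_⟩
  · rw [hyeq, h1]
    simp only [hfdef]
    rw [Real.rpow_le_rpow_left_iff one_lt_two]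
    linarith [hθ01.1]
  · rw [hyeq, h2]
    simp only [hfdef]
    rw [Real.rpow_lt_rpow_left_iff one_lt_two]
    linarith [hθ01.2]
  · rw [hyeq, hxeq]
    have hxf : (2:ℝ) ^ (c - (n:ℝ)) = f c := rfl
    rw [hxf, dist_comm]
    apply hfδ
    rw [Real.dist_eq, abs_lt]
    have hδδ₀ : δ ≤ δ₀ := min_le_left _ _
    constructor <;> [linarith [hθc.2]; linarith [hθc.1]]
end
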